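/- arXiv:1811.03143 — 7 statements merged into one kernel-verified Lean document; each statement's English description precedes it below -/
import Mathlib

section
/- Let n ≥ 1, 1 < p < q, and let d > 0. For each m ∈ ℤⁿ let Q_m be the cube ∏ᵢ [mᵢd, (mᵢ+1)d]. Suppose C > 0 is such that ‖u‖_{L^q(Q_m)} ≤ C‖u‖_{W^{1,p}(Q_m)} for all m and all u ∈ W^{1,p}(Q_m). Then for every u ∈ W^{1,p}(ℝⁿ) and every union Ω of such cubes, ‖u‖_{L^q(Ω)}^q ≤ C^p (sup_{m} ‖u‖_{L^q(Q_m)})^{q-p} ‖u‖_{W^{1,p}(ℝⁿ)}^p. -/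
open MeasureTheory Set

/-- The cube `∏ᵢ [mᵢ d, (mᵢ+1) d]` in `ℝⁿ`. -/
def latticeCube (n : ℕ) (d : ℝ) (m : Fin n → ℤ) : Set (Fin n → ℝ) :=
  univ.pi fun i => Icc ((m i : ℝ) * d) (((m i : ℝ) + 1) * d)

lemma latticeCube_meas (n : ℕ) (d : ℝ) (m : Fin n → ℤ) :
    MeasurableSet (latticeCube n d m) :=
  MeasurableSet.univ_pi fun _ => measurableSet_Icc

lemma cube_aedisjoint (n : ℕ) {d : ℝ} (hd : 0 < d) {a b : Fin n → ℤ} (hab : a ≠ b) :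
    volume (latticeCube n d a ∩ latticeCube n d b) = 0 := by
  obtain ⟨i, hi⟩ := Function.ne_iff.mp hab
  unfold latticeCube
  rw [← Set.pi_inter_distrib, volume_pi_pi]
  apply Finset.prod_eq_zero (Finset.mem_univ i)
  rw [Set.Icc_inter_Icc, Real.volume_Icc]
  rw [ENNReal.ofReal_eq_zero]
  have key : ∀ c e : ℤ, c < e →
      ((c : ℝ) + 1) * d ≤ (e : ℝ) * d := by
    intro c e hce
    apply mul_le_mul_of_nonneg_right _ hd.le
    have : (c : ℝ) + 1 ≤ e := by exact_mod_cast hce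
    linarith
  rcases lt_or_gt_of_ne hi with h | h
  · have h1 := key _ _ h
    have h2 : (((a i:ℝ)+1)*d) ⊓ (((b i:ℝ)+1)*d) ≤ ((a i:ℝ)+1)*d := inf_le_left
    have h3 : (b i:ℝ)*d ≤ ((a i:ℝ)*d) ⊔ ((b i:ℝ)*d) := le_sup_right
    linarith
  · have h1 := key _ _ h
    have h2 : (((a i:ℝ)+1)*d) ⊓ (((b i:ℝ)+1)*d) ≤ ((b i:ℝ)+1)*d := inf_le_right
    have h3 : (a i:ℝ)*d ≤ ((a i:ℝ)*d) ⊔ ((b i:ℝ)*d) := le_sup_left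
    linarith

/-- Summing the Sobolev inequality over lattice cubes: if
`‖u‖_{L^q(Q_m)} ≤ C ‖u‖_{W^{1,p}(Q_m)}` for all cubes `Q_m` and all `u ∈ W^{1,p}(Q_m)`,
then for every `u ∈ W^{1,p}(ℝⁿ)` and every union `Ω` of such cubes,
`‖u‖_{L^q(Ω)}^q ≤ C^p (sup_m ‖u‖_{L^q(Q_m)})^{q-p} ‖u‖_{W^{1,p}(ℝⁿ)}^p`. -/
theorem lq_bound_on_cube_union
    (n : ℕ) (hn : 1 ≤ n) (p q : ℝ) (hp : 1 < p) (hpq : p < q)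
    (d : ℝ) (hd : 0 < d) (C : ℝ) (hC : 0 < C)
    (hSob : ∀ (m : Fin n → ℤ) (u : (Fin n → ℝ) → ℝ),
      DifferentiableOn ℝ u (latticeCube n d m) →
      IntegrableOn (fun x => ‖fderiv ℝ u x‖ ^ p + |u x| ^ p) (latticeCube n d m) →
      IntegrableOn (fun x => |u x| ^ q) (latticeCube n d m) →
      (∫ x in latticeCube n d m, |u x| ^ q) ^ (1 / q)
        ≤ C * (∫ x in latticeCube n d m, (‖fderiv ℝ u x‖ ^ p + |u x| ^ p)) ^ (1 / p))
    (u : (Fin n → ℝ) → ℝ)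
    (hu_diff : Differentiable ℝ u)
    (hu_W : Integrable (fun x => ‖fderiv ℝ u x‖ ^ p + |u x| ^ p))
    (hu_Lq : Integrable (fun x => |u x| ^ q))
    (M : Set (Fin n → ℤ)) :
    (∫ x in ⋃ m ∈ M, latticeCube n d m, |u x| ^ q)
      ≤ C ^ p * (⨆ m ∈ M, (∫ x in latticeCube n d m, |u x| ^ q) ^ (1 / q)) ^ (q - p)
          * (∫ x, (‖fderiv ℝ u x‖ ^ p + |u x| ^ p)) := by
  set Q := latticeCube n d with hQ
  set bfun : (Fin n → ℝ) → ℝ := fun x => ‖fderiv ℝ u x‖ ^ p + |u x| ^ p with hbfun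
  set afun : (Fin n → ℝ) → ℝ := fun x => |u x| ^ q with hafun
  set fa : (Fin n → ℤ) → ℝ := fun m => ∫ x in Q m, afun x with hfa
  set fb : (Fin n → ℤ) → ℝ := fun m => ∫ x in Q m, bfun x with hfb
  have hp0 : (0:ℝ) < p := lt_trans one_pos hp
  have hq0 : (0:ℝ) < q := lt_trans hp0 hpq
  have hbnn : ∀ x, 0 ≤ bfun x := fun x =>
    add_nonneg (Real.rpow_nonneg (norm_nonneg _) _) (Real.rpow_nonneg (abs_nonneg _) _)
  have hann : ∀ x, 0 ≤ afun x := fun x => Real.rpow_nonneg (abs_nonneg _) _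
  have ha_nn : ∀ m, 0 ≤ fa m := fun m =>
    setIntegral_nonneg (latticeCube_meas n d m) fun x _ => hann x
  have hb_nn : ∀ m, 0 ≤ fb m := fun m =>
    setIntegral_nonneg (latticeCube_meas n d m) fun x _ => hbnn x
  have hb_le : ∀ m, fb m ≤ ∫ x, bfun x := fun m =>
    setIntegral_le_integral hu_W (Filter.Eventually.of_forall hbnn)
  have hI_nn : 0 ≤ ∫ x, bfun x := integral_nonneg hbnn
  have hSob' : ∀ m, fa m ^ (1/q) ≤ C * fb m ^ (1/p) := fun m =>
    hSob m u hu_diff.differentiableOn hu_W.integrableOn hu_Lq.integrableOn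
  -- the sup
  set g : (Fin n → ℤ) → ℝ := fun m => ⨆ _ : m ∈ M, fa m ^ (1/q) with hg
  set B : ℝ := C * (∫ x, bfun x) ^ (1/p) with hB
  have hfB : ∀ m, fa m ^ (1/q) ≤ B := fun m =>
    (hSob' m).trans (mul_le_mul_of_nonneg_left
      (Real.rpow_le_rpow (hb_nn m) (hb_le m) (by positivity)) hC.le)
  have hg_le : ∀ m, g m ≤ max B 0 := by
    intro m
    by_cases h : m ∈ M
    · rw [hg]; simp only [ciSup_pos h]
      exact (hfB m).trans (le_max_left _ _)
    · haveI : IsEmpty (m ∈ M) := ⟨h⟩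
      rw [hg]
      show (⨆ _ : m ∈ M, fa m ^ (1/q)) ≤ max B 0
      rw [iSup_of_empty', Real.sSup_empty]
      exact le_max_right _ _
  have hg_nn : ∀ m, 0 ≤ g m := by
    intro m
    by_cases h : m ∈ M
    · rw [hg]; simp only [ciSup_pos h]
      exact Real.rpow_nonneg (ha_nn m) _
    · haveI : IsEmpty (m ∈ M) := ⟨h⟩
      rw [hg]
      show (0:ℝ) ≤ ⨆ _ : m ∈ M, fa m ^ (1/q)
      rw [iSup_of_empty', Real.sSup_empty]
  have hBdd : BddAbove (Set.range g) := ⟨max B 0, by rintro x ⟨m, rfl⟩; exact hg_le m⟩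
  set S : ℝ := ⨆ m ∈ M, fa m ^ (1/q) with hS
  have hSg : S = ⨆ m, g m := rfl
  have hS_mem : ∀ m ∈ M, fa m ^ (1/q) ≤ S := by
    intro m hm
    rw [hSg]
    refine le_trans ?_ (le_ciSup hBdd m)
    rw [hg]; simp only [ciSup_pos hm]; exact le_rfl
  have hS_nn : 0 ≤ S := by
    rw [hSg]
    exact le_trans (hg_nn (fun _ => 0)) (le_ciSup hBdd _)
  -- per-cube bound
  have key : ∀ m ∈ M, fa m ≤ C ^ p * S ^ (q - p) * fb m := by
    intro m hm
    set t : ℝ := fa m ^ (1/q) with ht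
    have ht0 : 0 ≤ t := Real.rpow_nonneg (ha_nn m) _
    have h1 : fa m = t ^ q := by
      rw [ht, one_div, Real.rpow_inv_rpow (ha_nn m) hq0.ne']
    have h2 : t ^ q = t ^ (q - p) * t ^ p := by
      rw [← Real.rpow_add' ht0 (by rw [sub_add_cancel]; exact hq0.ne')]
      ring_nf
    have h3 : t ^ (q - p) ≤ S ^ (q - p) :=
      Real.rpow_le_rpow ht0 (hS_mem m hm) (by linarith)
    have h4 : t ^ p ≤ C ^ p * fb m := by
      calc t ^ p ≤ (C * fb m ^ (1/p)) ^ p :=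
            Real.rpow_le_rpow ht0 (hSob' m) hp0.le
        _ = C ^ p * (fb m ^ (1/p)) ^ p :=
            Real.mul_rpow hC.le (Real.rpow_nonneg (hb_nn m) _)
        _ = C ^ p * fb m := by
            rw [one_div, Real.rpow_inv_rpow (hb_nn m) hp0.ne']
    calc fa m = t ^ (q - p) * t ^ p := by rw [h1, h2]
      _ ≤ S ^ (q - p) * (C ^ p * fb m) :=
          mul_le_mul h3 h4 (Real.rpow_nonneg ht0 _) (Real.rpow_nonneg hS_nn _)
      _ = C ^ p * S ^ (q - p) * fb m := by ring
  -- decompose over the union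
  have hK_nn : 0 ≤ C ^ p * S ^ (q - p) :=
    mul_nonneg (Real.rpow_nonneg hC.le _) (Real.rpow_nonneg hS_nn _)
  have hmeas : ∀ i : M, NullMeasurableSet (Q (i : Fin n → ℤ)) volume := fun i =>
    (latticeCube_meas n d i).nullMeasurableSet
  have hdisj : Pairwise (Function.onFun (AEDisjoint volume) fun i : M => Q (i : Fin n → ℤ)) := by
    intro i j hij
    exact cube_aedisjoint n hd fun h => hij (Subtype.ext h)
  have hUnion : (⋃ m ∈ M, Q m) = ⋃ i : M, Q (i : Fin n → ℤ) := by
    rw [Set.biUnion_eq_iUnion]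
  have haSum : HasSum (fun i : M => fa (i : Fin n → ℤ)) (∫ x in ⋃ i : M, Q (i : Fin n → ℤ), afun x) :=
    hasSum_integral_iUnion_ae hmeas hdisj hu_Lq.integrableOn
  have hbSum : HasSum (fun i : M => fb (i : Fin n → ℤ)) (∫ x in ⋃ i : M, Q (i : Fin n → ℤ), bfun x) :=
    hasSum_integral_iUnion_ae hmeas hdisj hu_W.integrableOn
  calc (∫ x in ⋃ m ∈ M, Q m, afun x)
      = ∑' i : M, fa (i : Fin n → ℤ) := by rw [hUnion, ← haSum.tsum_eq]
    _ ≤ ∑' i : M, C ^ p * S ^ (q - p) * fb (i : Fin n → ℤ) :=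
        Summable.tsum_le_tsum (fun i => key i i.2) haSum.summable (hbSum.summable.mul_left _)
    _ = C ^ p * S ^ (q - p) * ∑' i : M, fb (i : Fin n → ℤ) := by rw [tsum_mul_left]
    _ = C ^ p * S ^ (q - p) * (∫ x in ⋃ i : M, Q (i : Fin n → ℤ), bfun x) := by
        rw [hbSum.tsum_eq]
    _ ≤ C ^ p * S ^ (q - p) * ∫ x, bfun x :=
        mul_le_mul_of_nonneg_left
          (setIntegral_le_integral hu_W (Filter.Eventually.of_forall hbnn)) hK_nn
end

section
/- Let 1 < p < q < p* (where p* = np/(n−p) if p < n and p* = ∞ otherwise). Suppose (u_j) is a sequence bounded in W^{1,p}(ℝⁿ), ω ⊆ ℝⁿ is open, and there exists ρ > 0 such that sup_{x ∈ ω} ∫_{B(x,ρ)} |u_j|^q dx → 0 as j → ∞. Then ∫_ω |u_j|^q dx → 0 as j → ∞. -/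
open MeasureTheory Set Filter Metric

section helpers

open Function Finset
open scoped ENNReal NNReal

local prefix:max "#" => Fintype.card

lemma ofReal_norm_eq_coe_nnnorm {E : Type*} [SeminormedAddCommGroup E] (a : E) :
    ENNReal.ofReal ‖a‖ = (‖a‖₊ : ℝ≥0∞) := ofReal_norm a

lemma ftc_bound {f : ℝ → ℝ} (hf : Differentiable ℝ f) (h2f : HasCompactSupport f) (x : ℝ) :
    (‖f x‖₊ : ℝ≥0∞) ≤ ∫⁻ y in Iic x, ‖deriv f y‖₊ := by
  by_cases hfin : (∫⁻ y in Iic x, ‖deriv f y‖₊) = ∞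
  · simp [hfin]
  have hmeas : Measurable (deriv f) := measurable_deriv f
  have hint : IntegrableOn (deriv f) (Iic x) := by
    refine ⟨hmeas.aestronglyMeasurable.restrict, ?_⟩
    rw [HasFiniteIntegral]
    exact lt_top_iff_ne_top.mpr hfin
  obtain ⟨R, hR⟩ := h2f.isBounded.subset_ball_lt 0 0
  set a : ℝ := min x (-(R+1)) with ha
  have hax : a ≤ x := min_le_left _ _
  have hfa : f a = 0 := by
    have : a ∉ tsupport f := by
      intro hmem
      have h2 := hR.2 hmem
      simp only [mem_ball, Real.dist_eq, sub_zero] at h2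
      have h1 : a ≤ -(R+1) := min_le_right _ _
      have : -R < a := neg_lt_of_abs_lt h2
      linarith
    exact image_eq_zero_of_notMem_tsupport this
  have huIcc : uIcc a x ⊆ Iic x := by
    rw [uIcc_of_le hax]; exact fun y hy => hy.2
  have hFTC : ∫ y in a..x, deriv f y = f x - f a :=
    intervalIntegral.integral_eq_sub_of_hasDerivAt (fun y _ => (hf y).hasDerivAt)
      ((hint.mono_set huIcc).intervalIntegrable)
  have h1 : ‖f x‖ ≤ ∫ y in Ioc a x, ‖deriv f y‖ := by
    calc ‖f x‖ = ‖∫ y in a..x, deriv f y‖ := by rw [hFTC, hfa, sub_zero]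
    _ ≤ ∫ y in Ioc a x, ‖deriv f y‖ := by
        rw [intervalIntegral.norm_intervalIntegral_eq, uIoc_of_le hax]
        exact norm_integral_le_integral_norm _
  have hIoc : Ioc a x ⊆ Iic x := fun y hy => hy.2
  calc (‖f x‖₊ : ℝ≥0∞) = ENNReal.ofReal ‖f x‖ := (ofReal_norm_eq_coe_nnnorm _).symm
    _ ≤ ENNReal.ofReal (∫ y in Ioc a x, ‖deriv f y‖) := ENNReal.ofReal_le_ofReal h1
    _ = ∫⁻ y in Ioc a x, ‖deriv f y‖₊ := by
        exact ofReal_integral_norm_eq_lintegral_enorm (hint.mono_set hIoc)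
    _ ≤ ∫⁻ y in Iic x, ‖deriv f y‖₊ := lintegral_mono_set hIoc


lemma add_rpow_le {a b : ℝ≥0∞} {p : ℝ} (hp : 0 ≤ p) : (a+b)^p ≤ 2^p * (a^p + b^p) := by
  rcases le_total a b with h | h
  · calc (a+b)^p ≤ (2*b)^p := by gcongr; rw [two_mul]; exact add_le_add_left h b
      _ = 2^p * b^p := ENNReal.mul_rpow_of_nonneg _ _ hp
      _ ≤ 2^p * (a^p + b^p) := by gcongr; exact le_add_self
  · calc (a+b)^p ≤ (2*a)^p := by gcongr; rw [two_mul]; exact add_le_add_right h a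
      _ = 2^p * a^p := ENNReal.mul_rpow_of_nonneg _ _ hp
      _ ≤ 2^p * (a^p + b^p) := by gcongr; exact le_self_add

lemma holder_exp {α : Type*} [MeasurableSpace α] (μ : Measure α) {f : α → ℝ≥0∞}
    (hf : AEMeasurable f μ) {r t : ℝ} (hr : 0 < r) (hrt : r ≤ t) :
    ∫⁻ x, f x ^ r ∂μ ≤ (∫⁻ x, f x ^ t ∂μ) ^ (r/t) * (μ univ) ^ (1 - r/t) := by
  have ht : 0 < t := lt_of_lt_of_le hr hrt
  rcases eq_or_lt_of_le hrt with heq | hlt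
  · subst heq
    rw [div_self hr.ne', ENNReal.rpow_one, sub_self, ENNReal.rpow_zero, mul_one]
  · set a : ℝ := t / r with ha
    have ha1 : 1 < a := (one_lt_div hr).mpr hlt
    have hconj : a.HolderConjugate (a / (a - 1)) := Real.HolderConjugate.conjExponent ha1
    have h := ENNReal.lintegral_mul_le_Lp_mul_Lq μ hconj
      ((hf.pow_const r)) (aemeasurable_const (b := (1:ℝ≥0∞)))
    simp only [Pi.mul_apply, mul_one] at h
    calc ∫⁻ x, f x ^ r ∂μ ≤ (∫⁻ x, (f x ^ r) ^ a ∂μ) ^ (1/a) *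
          (∫⁻ _x, (1:ℝ≥0∞) ^ (a / (a-1)) ∂μ) ^ (1/(a/(a-1))) := h
      _ = (∫⁻ x, f x ^ t ∂μ) ^ (r/t) * (μ univ) ^ (1 - r/t) := by
          congr 1
          · congr 1
            · congr 1 with x
              rw [← ENNReal.rpow_mul, ha]
              congr 1
              field_simp
            · rw [ha]; rw [one_div_div]
          · rw [ENNReal.one_rpow]
            rw [lintegral_one]
            congr 1
            rw [ha]
            rw [one_div_div]
            field_simp


lemma gns_aux {ι : Type*} [Fintype ι] {p : ℝ} (hp : Real.HolderConjugate #ι p)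
    {u : (ι → ℝ) → ℝ} (hu : Differentiable ℝ u) (h2u : HasCompactSupport u) :
    ∫⁻ x, (‖u x‖₊ : ℝ≥0∞) ^ p ≤ (∫⁻ x, ‖fderiv ℝ u x‖₊) ^ p := by
  classical
  have hDmeas : Measurable fun x => (‖fderiv ℝ u x‖₊ : ℝ≥0∞) :=
    (measurable_fderiv ℝ u).nnnorm.coe_nnreal_ennreal
  have : (1 : ℝ) ≤ ↑#ι - 1 := by
    have hι : (2 : ℝ) ≤ #ι := by exact_mod_cast hp.lt
    linarith
  calc ∫⁻ x, (‖u x‖₊ : ℝ≥0∞) ^ p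
      = ∫⁻ x, ((‖u x‖₊ : ℝ≥0∞) ^ (1 / (#ι - 1 : ℝ))) ^ (#ι : ℝ) := by
        congr! 2 with x
        rw [← ENNReal.rpow_mul, hp.conjugate_eq]
        field_simp
    _ = ∫⁻ x, ∏ _i : ι, (‖u x‖₊ : ℝ≥0∞) ^ (1 / (#ι - 1 : ℝ)) := by
        congr! 2 with x
        simp_rw [prod_const, card_univ]
        norm_cast
    _ ≤ ∫⁻ x, ∏ i, (∫⁻ xᵢ, ‖fderiv ℝ u (update x i xᵢ)‖₊) ^ ((1 : ℝ) / (#ι - 1 : ℝ)) := ?_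
    _ ≤ (∫⁻ x, ‖fderiv ℝ u x‖₊) ^ p := by
        apply lintegral_prod_lintegral_pow_le _ hp
        exact hDmeas
  gcongr with x i
  calc (‖u x‖₊ : ℝ≥0∞)
    _ ≤ ∫⁻ xᵢ in Iic (x i), ‖deriv (u ∘ update x i) xᵢ‖₊ := by
        apply le_trans (by simp) (ftc_bound ?_ ?_ _)
        · exact fun t => DifferentiableAt.comp t (hu _) (hasDerivAt_update x i t).differentiableAt
        · exact h2u.comp_isClosedEmbedding (isClosedEmbedding_update x i)
    _ ≤ ∫⁻ xᵢ, (‖fderiv ℝ u (update x i xᵢ)‖₊ : ℝ≥0∞) := ?_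
  refine le_trans (lintegral_mono fun y => ENNReal.coe_le_coe.mpr ?_) (setLIntegral_le_lintegral _ _)
  calc ‖deriv (u ∘ update x i) y‖₊ = ‖fderiv ℝ u (update x i y) (deriv (update x i) y)‖₊ := by
        rw [fderiv_comp_deriv _ (hu _) (hasDerivAt_update x i y).differentiableAt]
    _ ≤ ‖fderiv ℝ u (update x i y)‖₊ * ‖deriv (update x i) y‖₊ :=
        ContinuousLinearMap.le_opNNNorm ..
    _ ≤ ‖fderiv ℝ u (update x i y)‖₊ := by simp [deriv_update, Pi.nnnorm_single]


lemma gns_r {ι : Type*} [Fintype ι] {r : ℝ} (hr : 1 < r) (hrn : r < #ι)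
    {u : (ι → ℝ) → ℝ} (hu : Differentiable ℝ u) (h2u : HasCompactSupport u) :
    ∫⁻ x, (‖u x‖₊ : ℝ≥0∞) ^ ((#ι : ℝ) * r / (#ι - r)) ≤
      ENNReal.ofReal (r * ((#ι : ℝ) - 1) / (#ι - r)) ^ ((#ι : ℝ) * r / (#ι - r)) *
      (∫⁻ x, (‖fderiv ℝ u x‖₊ : ℝ≥0∞) ^ r) ^ (((#ι : ℝ) * r / (#ι - r)) / r) := by
  classical
  set N : ℝ := (#ι : ℝ) with hN
  have hN1 : 1 < N := lt_trans hr hrn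
  have hNr : 0 < N - r := by linarith
  have hN0 : 0 < N - 1 := by linarith
  have hr0 : 0 < r - 1 := by linarith
  set r' : ℝ := N * r / (N - r) with hr'
  set γ : ℝ := r * (N - 1) / (N - r) with hγ
  set s : ℝ := r / (r - 1) with hs
  set n' : ℝ := Real.conjExponent N with hn'
  have hn'e : n' = N / (N - 1) := rfl
  have hn'0 : 0 < n' := by rw [hn'e]; positivity
  have hr'0 : 0 < r' := by rw [hr']; positivity
  have hs0 : 0 < s := by rw [hs]; positivity
  have hγ1 : 1 < γ := by
    rw [hγ, lt_div_iff₀ hNr]; nlinarith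
  have hγ0 : 0 < γ := lt_trans one_pos hγ1
  have hγn' : γ * n' = r' := by
    rw [hγ, hn'e, hr']; field_simp
  have hγs : (γ - 1) * s = r' := by
    have : γ - 1 = N * (r - 1) / (N - r) := by rw [hγ]; field_simp; ring
    rw [this, hs, hr']; field_simp
  have hsub : 1 / n' - 1 / s = 1 / r' := by
    rw [hn'e, hs, hr']; field_simp; ring
  have hconj : (N : ℝ).HolderConjugate n' := Real.HolderConjugate.conjExponent hN1
  have hconj2 : s.HolderConjugate r := (Real.HolderConjugate.conjExponent hr).symm
  -- the function v = |u|^γ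
  set v : (ι → ℝ) → ℝ := fun x => ‖u x‖ ^ γ with hv
  have hvdiff : Differentiable ℝ v := hu.norm_rpow hγ1
  have h2v : HasCompactSupport v := (h2u.norm).rpow_const hγ0.ne'
  have hvnn : ∀ x, (‖v x‖₊ : ℝ≥0∞) = (‖u x‖₊ : ℝ≥0∞) ^ γ := by
    intro x
    rw [hv]
    rw [← ENNReal.coe_rpow_of_nonneg _ hγ0.le]
    congr 1
    rw [← nnnorm_norm (u x) ]
    exact Real.nnnorm_rpow_of_nonneg (norm_nonneg _)
  set A : ℝ≥0∞ := ∫⁻ x, (‖u x‖₊ : ℝ≥0∞) ^ r' with hA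
  set B : ℝ≥0∞ := ∫⁻ x, (‖fderiv ℝ u x‖₊ : ℝ≥0∞) ^ r with hB
  show A ≤ ENNReal.ofReal γ ^ r' * B ^ (r' / r)
  by_cases hA0 : A = 0
  · rw [hA0]; exact zero_le
  -- A is finite
  have hAtop : A ≠ ∞ := by
    obtain ⟨C, hC⟩ := h2u.exists_bound_of_continuous hu.continuous
    have hC0 : 0 ≤ C := le_trans (norm_nonneg _) (hC (Classical.arbitrary _))
    have hb : ∀ x, (‖u x‖₊ : ℝ≥0∞) ^ r' ≤
        (tsupport u).indicator (fun _ => ENNReal.ofReal C ^ r') x := by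
      intro x
      by_cases hx : x ∈ tsupport u
      · rw [indicator_of_mem hx]
        gcongr
        rw [← ofReal_norm_eq_coe_nnnorm]
        exact ENNReal.ofReal_le_ofReal (hC x)
      · rw [indicator_of_notMem hx, image_eq_zero_of_notMem_tsupport hx]
        simp [ENNReal.zero_rpow_of_pos hr'0]
    have : A < ∞ := by
      calc A ≤ ∫⁻ x, (tsupport u).indicator (fun _ => ENNReal.ofReal C ^ r') x := lintegral_mono hb
        _ = ENNReal.ofReal C ^ r' * volume (tsupport u) := by
            rw [lintegral_indicator (isClosed_tsupport u).measurableSet]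
            simp [lintegral_const]
        _ < ∞ := by
            apply ENNReal.mul_lt_top
            · exact (ENNReal.rpow_lt_top_of_nonneg hr'0.le ENNReal.ofReal_ne_top)
            · exact h2u.isCompact.measure_lt_top
    exact this.ne
  -- Step 1: A^{1/n'} ≤ ∫⁻ ‖Dv‖
  have step1 : A ≤ (∫⁻ x, (‖fderiv ℝ v x‖₊ : ℝ≥0∞)) ^ n' := by
    have : A = ∫⁻ x, (‖v x‖₊ : ℝ≥0∞) ^ n' := by
      rw [hA]
      congr 1 with x
      rw [hvnn x, ← ENNReal.rpow_mul, hγn']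
    rw [this]
    exact gns_aux hconj hvdiff h2v
  -- Step 2: ∫⁻ ‖Dv‖ ≤ γ * A^{1/s} * B^{1/r}
  have step2 : (∫⁻ x, (‖fderiv ℝ v x‖₊ : ℝ≥0∞)) ≤
      (ENNReal.ofReal γ * B ^ (1 / r)) * A ^ (1 / s) := by
    have hptwise : ∀ x, (‖fderiv ℝ v x‖₊ : ℝ≥0∞) ≤
        ENNReal.ofReal γ * ((‖u x‖₊ : ℝ≥0∞) ^ (γ - 1) * (‖fderiv ℝ u x‖₊ : ℝ≥0∞)) := by
      intro x
      have h := norm_fderiv_norm_rpow_le hu (x := x) hγ1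
      calc (‖fderiv ℝ v x‖₊ : ℝ≥0∞) = ENNReal.ofReal ‖fderiv ℝ v x‖ :=
            (ofReal_norm_eq_coe_nnnorm _).symm
        _ ≤ ENNReal.ofReal (γ * ‖u x‖ ^ (γ - 1) * ‖fderiv ℝ u x‖) := ENNReal.ofReal_le_ofReal h
        _ = ENNReal.ofReal γ * ((‖u x‖₊ : ℝ≥0∞) ^ (γ - 1) * (‖fderiv ℝ u x‖₊ : ℝ≥0∞)) := by
            rw [ENNReal.ofReal_mul (by positivity), ENNReal.ofReal_mul hγ0.le]
            rw [mul_assoc]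
            congr 1
            congr 1
            · rw [← ofReal_norm_eq_coe_nnnorm, ← ENNReal.ofReal_rpow_of_nonneg (norm_nonneg _) (by linarith)]
            · exact ofReal_norm_eq_coe_nnnorm _
    calc (∫⁻ x, (‖fderiv ℝ v x‖₊ : ℝ≥0∞))
        ≤ ∫⁻ x, ENNReal.ofReal γ * ((‖u x‖₊ : ℝ≥0∞) ^ (γ - 1) * (‖fderiv ℝ u x‖₊ : ℝ≥0∞)) :=
          lintegral_mono hptwise
      _ = ENNReal.ofReal γ * ∫⁻ x, ((‖u x‖₊ : ℝ≥0∞) ^ (γ - 1) * (‖fderiv ℝ u x‖₊ : ℝ≥0∞)) :=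
          lintegral_const_mul' _ _ ENNReal.ofReal_ne_top
      _ ≤ ENNReal.ofReal γ * ((∫⁻ x, ((‖u x‖₊ : ℝ≥0∞) ^ (γ - 1)) ^ s) ^ (1 / s) *
            (∫⁻ x, (‖fderiv ℝ u x‖₊ : ℝ≥0∞) ^ r) ^ (1 / r)) := by
          gcongr
          exact ENNReal.lintegral_mul_le_Lp_mul_Lq volume hconj2
            ((hu.continuous.measurable.nnnorm.coe_nnreal_ennreal.pow_const _).aemeasurable)
            ((measurable_fderiv ℝ u).nnnorm.coe_nnreal_ennreal.aemeasurable)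
      _ = (ENNReal.ofReal γ * B ^ (1 / r)) * A ^ (1 / s) := by
          have : ∀ x : ι → ℝ, ((‖u x‖₊ : ℝ≥0∞) ^ (γ - 1)) ^ s = (‖u x‖₊ : ℝ≥0∞) ^ r' := by
            intro x; rw [← ENNReal.rpow_mul, hγs]
          simp_rw [this]
          rw [← hA, ← hB]; ring
  -- combine
  have hAs0 : A ^ (1 / s) ≠ 0 := by
    simp only [ne_eq, ENNReal.rpow_eq_zero_iff, not_or]
    constructor
    · rintro ⟨h, _⟩; exact hA0 h
    · rintro ⟨h, _⟩; exact hAtop h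
  have hAstop : A ^ (1 / s) ≠ ∞ := ENNReal.rpow_ne_top_of_nonneg (by positivity) hAtop
  have key : A ^ (1 / n') ≤ (ENNReal.ofReal γ * B ^ (1 / r)) * A ^ (1 / s) := by
    calc A ^ (1 / n') ≤ ((∫⁻ x, (‖fderiv ℝ v x‖₊ : ℝ≥0∞)) ^ n') ^ (1 / n') :=
          ENNReal.rpow_le_rpow step1 (by positivity)
      _ = ∫⁻ x, (‖fderiv ℝ v x‖₊ : ℝ≥0∞) := by
          rw [← ENNReal.rpow_mul, mul_one_div, div_self hn'0.ne', ENNReal.rpow_one]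
      _ ≤ _ := step2
  have key2 : A ^ (1 / r') ≤ ENNReal.ofReal γ * B ^ (1 / r) := by
    rw [← hsub, ENNReal.rpow_sub _ _ hA0 hAtop]
    rw [ENNReal.div_le_iff hAs0 hAstop]
    exact key
  calc A = (A ^ (1 / r')) ^ r' := by
        rw [← ENNReal.rpow_mul, one_div_mul_cancel hr'0.ne', ENNReal.rpow_one]
    _ ≤ (ENNReal.ofReal γ * B ^ (1 / r)) ^ r' := by gcongr
    _ = ENNReal.ofReal γ ^ r' * B ^ (r' / r) := by
        rw [ENNReal.mul_rpow_of_nonneg _ _ hr'0.le, ← ENNReal.rpow_mul, one_div_mul_eq_div]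


lemma gns_one {ι : Type*} [Fintype ι] [Unique ι] {v : (ι → ℝ) → ℝ}
    (hv : Differentiable ℝ v) (h2v : HasCompactSupport v) (x : ι → ℝ) :
    (‖v x‖₊ : ℝ≥0∞) ≤ ∫⁻ y, ‖fderiv ℝ v y‖₊ := by
  set e : (ι → ℝ) ≃L[ℝ] ℝ := ContinuousLinearEquiv.funUnique ι ℝ ℝ with he
  set w : ℝ → ℝ := v ∘ e.symm with hw
  have hwdiff : Differentiable ℝ w := hv.comp e.symm.differentiable
  have h2w : HasCompactSupport w := h2v.comp_homeomorph e.symm.toHomeomorph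
  have hce : ∀ t : ℝ, e.symm t = fun _ => t := fun t => rfl
  have hcx : e.symm (x default) = x := by
    funext i
    have : i = default := Unique.eq_default i
    rw [hce, this]
  have hwx : w (x default) = v x := by rw [hw, Function.comp_apply, hcx]
  have hderiv : ∀ t : ℝ, HasDerivAt w (fderiv ℝ v (e.symm t) ((e.symm : ℝ →L[ℝ] (ι → ℝ)) 1)) t := by
    intro t
    exact (hv (e.symm t)).hasFDerivAt.comp_hasDerivAt t
      ((e.symm : ℝ →L[ℝ] (ι → ℝ)).hasDerivAt)
  have hdbound : ∀ t : ℝ, (‖deriv w t‖₊ : ℝ≥0∞) ≤ ‖fderiv ℝ v (e.symm t)‖₊ := by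
    intro t
    rw [(hderiv t).deriv]
    have h1 : ‖((e.symm : ℝ →L[ℝ] (ι → ℝ)) 1)‖₊ ≤ 1 := by
      have h2 : ((e.symm : ℝ →L[ℝ] (ι → ℝ)) 1) = fun _ => (1 : ℝ) := rfl
      rw [h2]
      calc ‖fun _ : ι => (1:ℝ)‖₊ ≤ ‖(1:ℝ)‖₊ := pi_nnnorm_const_le (1:ℝ)
        _ = 1 := by simp
    calc (‖fderiv ℝ v (e.symm t) ((e.symm : ℝ →L[ℝ] (ι → ℝ)) 1)‖₊ : ℝ≥0∞)
        ≤ (‖fderiv ℝ v (e.symm t)‖₊ * ‖((e.symm : ℝ →L[ℝ] (ι → ℝ)) 1)‖₊ : ℝ≥0) := by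
          exact_mod_cast ContinuousLinearMap.le_opNNNorm _ _
      _ ≤ (‖fderiv ℝ v (e.symm t)‖₊ * 1 : ℝ≥0) := by
          exact_mod_cast mul_le_mul_right h1 _
      _ = ‖fderiv ℝ v (e.symm t)‖₊ := by rw [mul_one]
  have hmp : MeasurePreserving (⇑(MeasurableEquiv.funUnique ι ℝ)) volume volume := by
    have key := volume_preserving_funUnique ι ℝ
    have hinst : (Unique.fintype : Fintype ι) = ‹Fintype ι› := Subsingleton.elim _ _
    rwa [hinst] at key
  have hG : Measurable fun t : ℝ => (‖fderiv ℝ v (e.symm t)‖₊ : ℝ≥0∞) := by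
    exact ((measurable_fderiv ℝ v).comp e.symm.continuous.measurable).nnnorm.coe_nnreal_ennreal
  calc (‖v x‖₊ : ℝ≥0∞) = ‖w (x default)‖₊ := by rw [hwx]
    _ ≤ ∫⁻ t in Iic (x default), ‖deriv w t‖₊ := ftc_bound hwdiff h2w _
    _ ≤ ∫⁻ t, ‖deriv w t‖₊ := lintegral_mono_set (subset_univ _) |>.trans (by rw [Measure.restrict_univ])
    _ ≤ ∫⁻ t, (‖fderiv ℝ v (e.symm t)‖₊ : ℝ≥0∞) := lintegral_mono hdbound
    _ = ∫⁻ y, ‖fderiv ℝ v y‖₊ := by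
        rw [← hmp.lintegral_comp hG]
        congr 1 with y
        congr 1
        have : e.symm ((MeasurableEquiv.funUnique ι ℝ) y) = y := by
          funext i
          have : i = default := Unique.eq_default i
          rw [this]; rfl
        rw [this]


lemma cutoff_est {n : ℕ} {p ρ r : ℝ} (hp : 1 < p) (hρ : 0 < ρ) (hr1 : 1 ≤ r) (hrp : r ≤ p) :
    ∃ c : ℝ≥0∞, c ≠ ⊤ ∧ ∀ (u : (Fin n → ℝ) → ℝ), Differentiable ℝ u → ∀ m : Fin n → ℝ,
    ∃ v : (Fin n → ℝ) → ℝ, Differentiable ℝ v ∧ HasCompactSupport v ∧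
      (∀ x ∈ closedBall m (ρ/2), v x = u x) ∧
      (∫⁻ x, (‖fderiv ℝ v x‖₊ : ℝ≥0∞) ^ r) ≤
        c * (∫⁻ x in closedBall m ρ,
          ((‖fderiv ℝ u x‖₊ : ℝ≥0∞) ^ p + (‖u x‖₊ : ℝ≥0∞) ^ p)) ^ (r/p) := by
  set E := Fin n → ℝ
  have hp0 : (0:ℝ) < p := lt_trans one_pos hp
  have hr0 : (0:ℝ) < r := lt_of_lt_of_le one_pos hr1
  -- the bump function
  set χ : ContDiffBump (0 : E) := ⟨ρ/2, ρ, half_pos hρ, half_lt_self hρ⟩ with hχ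
  have hχdiff : Differentiable ℝ (χ : E → ℝ) := (χ.contDiff (n := 1)).differentiable (by simp)
  obtain ⟨L, hL⟩ := ((χ.hasCompactSupport).fderiv ℝ).exists_bound_of_continuous
    ((χ.contDiff (n := 1)).continuous_fderiv (by simp))
  have hL0 : 0 ≤ L := le_trans (norm_nonneg _) (hL 0)
  set Le : ℝ≥0∞ := ENNReal.ofReal L with hLe
  have hLetop : Le ≠ ⊤ := ENNReal.ofReal_ne_top
  set volK : ℝ≥0∞ := ENNReal.ofReal ((2 * ρ) ^ n) with hvolK
  set c₀ : ℝ≥0∞ := 2^p * (1 + Le^p) with hc₀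
  have hc₀top : c₀ ≠ ⊤ := by
    apply ENNReal.mul_ne_top
    · exact (ENNReal.rpow_lt_top_of_nonneg hp0.le (by norm_num)).ne
    · exact (ENNReal.add_lt_top.mpr ⟨ENNReal.one_lt_top,
        ENNReal.rpow_lt_top_of_nonneg hp0.le hLetop⟩).ne
  refine ⟨c₀^(r/p) * volK^(1 - r/p), ?_, ?_⟩
  · apply ENNReal.mul_ne_top
    · exact (ENNReal.rpow_lt_top_of_nonneg (by positivity) hc₀top).ne
    · exact (ENNReal.rpow_lt_top_of_nonneg (by simp; exact div_le_one_of_le₀ hrp hp0.le)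
        ENNReal.ofReal_ne_top).ne
  intro u hu m
  set χm : E → ℝ := fun x => χ (x - m) with hχm
  have hχmdiff : Differentiable ℝ χm := hχdiff.comp (differentiable_id.sub_const m)
  have hχmfd : ∀ x, fderiv ℝ χm x = fderiv ℝ (χ : E → ℝ) (x - m) := by
    intro x
    have h1 : HasFDerivAt (fun y : E => y - m) (ContinuousLinearMap.id ℝ E) x :=
      (hasFDerivAt_id x).sub_const m
    have h2 : HasFDerivAt (χ : E → ℝ) (fderiv ℝ (χ : E → ℝ) (x - m)) (x - m) :=
      (hχdiff (x - m)).hasFDerivAt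
    have h3 := h2.comp x h1
    rw [ContinuousLinearMap.comp_id] at h3
    exact h3.fderiv
  set v : E → ℝ := fun x => χm x * u x with hv
  have hvdiff : Differentiable ℝ v := hχmdiff.mul hu
  have hχmsupp : support χm ⊆ ball m ρ := by
    intro x hx
    have : χ (x - m) ≠ 0 := hx
    have h2 : x - m ∈ support (χ : E → ℝ) := this
    rw [χ.support_eq] at h2
    simp only [mem_ball, dist_zero_right] at h2
    rw [mem_ball, dist_eq_norm]; exact h2
  have hχmcs : HasCompactSupport χm := by
    apply HasCompactSupport.of_support_subset_isCompact (isCompact_closedBall m ρ)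
    exact hχmsupp.trans ball_subset_closedBall
  have h2v : HasCompactSupport v := hχmcs.mul_right
  refine ⟨v, hvdiff, h2v, ?_, ?_⟩
  · intro x hx
    have hmem : x - m ∈ closedBall (0:E) (ρ/2) := by
      simpa [mem_closedBall, dist_eq_norm] using hx
    have : χ (x - m) = 1 := χ.one_of_mem_closedBall hmem
    rw [hv]
    simp only [hχm, this, one_mul]
  -- the derivative estimate
  set K := closedBall m ρ with hK
  set W : E → ℝ≥0∞ := fun x => (‖fderiv ℝ u x‖₊ : ℝ≥0∞) + Le * (‖u x‖₊ : ℝ≥0∞) with hW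
  have hWmeas : Measurable W :=
    ((measurable_fderiv ℝ u).nnnorm.coe_nnreal_ennreal).add
      (measurable_const.mul (hu.continuous.measurable.nnnorm.coe_nnreal_ennreal))
  have hDvW : ∀ x, (‖fderiv ℝ v x‖₊ : ℝ≥0∞) ≤ W x := by
    intro x
    have hfd : fderiv ℝ v x = χm x • fderiv ℝ u x + u x • fderiv ℝ χm x :=
      fderiv_mul (hχmdiff x) (hu x)
    have hnorm : ‖fderiv ℝ v x‖ ≤ ‖fderiv ℝ u x‖ + L * ‖u x‖ := by
      rw [hfd]
      have hb1 : |χm x| ≤ 1 := by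
        rw [abs_le]; exact ⟨by linarith [χ.nonneg (x := x - m)], χ.le_one⟩
      have hb2 : ‖fderiv ℝ χm x‖ ≤ L := by rw [hχmfd]; exact hL _
      calc ‖χm x • fderiv ℝ u x + u x • fderiv ℝ χm x‖
          ≤ ‖χm x • fderiv ℝ u x‖ + ‖u x • fderiv ℝ χm x‖ := norm_add_le _ _
        _ = |χm x| * ‖fderiv ℝ u x‖ + |u x| * ‖fderiv ℝ χm x‖ := by
            rw [norm_smul, norm_smul, Real.norm_eq_abs, Real.norm_eq_abs]
        _ ≤ 1 * ‖fderiv ℝ u x‖ + |u x| * L :=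
            add_le_add (mul_le_mul_of_nonneg_right hb1 (norm_nonneg _))
              (mul_le_mul_of_nonneg_left hb2 (abs_nonneg _))
        _ = ‖fderiv ℝ u x‖ + L * ‖u x‖ := by rw [Real.norm_eq_abs]; ring
    calc (‖fderiv ℝ v x‖₊ : ℝ≥0∞) = ENNReal.ofReal ‖fderiv ℝ v x‖ :=
          (ofReal_norm_eq_coe_nnnorm _).symm
      _ ≤ ENNReal.ofReal (‖fderiv ℝ u x‖ + L * ‖u x‖) := ENNReal.ofReal_le_ofReal hnorm
      _ ≤ W x := by
          rw [ENNReal.ofReal_add (norm_nonneg _) (by positivity),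
            ENNReal.ofReal_mul hL0]
          rw [hW, ofReal_norm_eq_coe_nnnorm, ofReal_norm_eq_coe_nnnorm]
  have hvanish : ∀ x, x ∉ K → fderiv ℝ v x = 0 := by
    intro x hx
    by_contra h0
    have hxsupp : x ∈ tsupport v := support_fderiv_subset ℝ h0
    have : tsupport v ⊆ K := by
      apply closure_minimal ?_ Metric.isClosed_closedBall
      intro y hy
      have : χm y ≠ 0 := by
        intro hz
        apply hy
        rw [hv]; simp [hz]
      exact ball_subset_closedBall (hχmsupp this)
    exact hx (this hxsupp)
  -- main chain
  set Eng : ℝ≥0∞ := ∫⁻ x in K, ((‖fderiv ℝ u x‖₊ : ℝ≥0∞) ^ p + (‖u x‖₊ : ℝ≥0∞) ^ p) with hEng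
  have hvolKK : volume K = volK := by
    rw [hK, hvolK, Real.volume_pi_closedBall m hρ.le]
    norm_num
  calc ∫⁻ x, (‖fderiv ℝ v x‖₊ : ℝ≥0∞) ^ r
      = ∫⁻ x in K, (‖fderiv ℝ v x‖₊ : ℝ≥0∞) ^ r := by
        rw [← lintegral_indicator measurableSet_closedBall]
        congr 1 with x
        by_cases hx : x ∈ K
        · rw [indicator_of_mem hx]
        · rw [indicator_of_notMem hx, hvanish x hx]
          simp [ENNReal.zero_rpow_of_pos hr0]
    _ ≤ ∫⁻ x in K, W x ^ r := by
        apply lintegral_mono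
        intro x; exact ENNReal.rpow_le_rpow (hDvW x) hr0.le
    _ ≤ (∫⁻ x in K, W x ^ p) ^ (r/p) * ((volume.restrict K) univ) ^ (1 - r/p) :=
        holder_exp _ (hWmeas.aemeasurable) hr0 hrp
    _ = (∫⁻ x in K, W x ^ p) ^ (r/p) * volK ^ (1 - r/p) := by
        rw [Measure.restrict_apply_univ, hvolKK]
    _ ≤ (c₀ * Eng) ^ (r/p) * volK ^ (1 - r/p) := by
        refine mul_le_mul_left (ENNReal.rpow_le_rpow ?_ (by positivity)) _
        calc ∫⁻ x in K, W x ^ p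
            ≤ ∫⁻ x in K, c₀ * ((‖fderiv ℝ u x‖₊ : ℝ≥0∞) ^ p + (‖u x‖₊ : ℝ≥0∞) ^ p) := by
              apply lintegral_mono
              intro x
              calc W x ^ p ≤ 2^p * (((‖fderiv ℝ u x‖₊ : ℝ≥0∞)) ^ p
                    + (Le * (‖u x‖₊ : ℝ≥0∞)) ^ p) := add_rpow_le hp0.le
                _ = 2^p * ((‖fderiv ℝ u x‖₊ : ℝ≥0∞) ^ p + Le^p * (‖u x‖₊ : ℝ≥0∞) ^ p) := by
                    rw [ENNReal.mul_rpow_of_nonneg _ _ hp0.le]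
                _ ≤ c₀ * ((‖fderiv ℝ u x‖₊ : ℝ≥0∞) ^ p + (‖u x‖₊ : ℝ≥0∞) ^ p) := by
                    rw [hc₀, mul_assoc]
                    refine mul_le_mul_right ?_ _
                    rw [add_mul, one_mul]
                    exact add_le_add le_self_add (mul_le_mul_right le_add_self _)
            _ = c₀ * Eng := lintegral_const_mul' _ _ hc₀top
    _ = (c₀^(r/p) * volK^(1 - r/p)) * Eng ^ (r/p) := by
        rw [ENNReal.mul_rpow_of_nonneg _ _ (by positivity)]
        ring


lemma local_est {n : ℕ} (hn : 1 ≤ n) {p q ρ : ℝ} (hp : 1 < p) (hpq : p < q)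
    (hq_sub : p < n → q < n * p / (n - p)) (hρ : 0 < ρ) :
    ∃ C : ℝ≥0∞, C ≠ ⊤ ∧ ∀ (u : (Fin n → ℝ) → ℝ), Differentiable ℝ u → ∀ m : Fin n → ℝ,
      ∫⁻ x in closedBall m (ρ/2), (‖u x‖₊ : ℝ≥0∞) ^ q ≤
        C * (∫⁻ x in closedBall m ρ,
          ((‖fderiv ℝ u x‖₊ : ℝ≥0∞) ^ p + (‖u x‖₊ : ℝ≥0∞) ^ p)) ^ (q/p) := by
  have hp0 : (0:ℝ) < p := lt_trans one_pos hp
  have hq0 : (0:ℝ) < q := lt_trans hp0 hpq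
  rcases eq_or_lt_of_le hn with hn1 | hn2
  · -- case n = 1
    subst hn1
    obtain ⟨c, hctop, hc⟩ := cutoff_est (n := 1) (r := 1) hp hρ le_rfl hp.le
    set V : ℝ≥0∞ := ENNReal.ofReal ((2 * (ρ/2)) ^ 1) with hV
    refine ⟨V * c ^ q, ?_, ?_⟩
    · exact ENNReal.mul_ne_top ENNReal.ofReal_ne_top
        (ENNReal.rpow_lt_top_of_nonneg hq0.le hctop).ne
    intro u hu m
    obtain ⟨v, hvdiff, h2v, hagree, hbound⟩ := hc u hu m
    set Eng : ℝ≥0∞ := ∫⁻ x in closedBall m ρ,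
        ((‖fderiv ℝ u x‖₊ : ℝ≥0∞) ^ p + (‖u x‖₊ : ℝ≥0∞) ^ p) with hEng
    have hI : (∫⁻ x, (‖fderiv ℝ v x‖₊ : ℝ≥0∞)) ≤ c * Eng ^ ((1:ℝ)/p) := by
      have := hbound
      simpa [ENNReal.rpow_one] using this
    calc ∫⁻ x in closedBall m (ρ/2), (‖u x‖₊ : ℝ≥0∞) ^ q
        = ∫⁻ x in closedBall m (ρ/2), (‖v x‖₊ : ℝ≥0∞) ^ q := by
          apply setLIntegral_congr_fun measurableSet_closedBall
          intro x hx
          simp only [hagree x hx]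
      _ ≤ ∫⁻ _x in closedBall m (ρ/2), (c * Eng ^ ((1:ℝ)/p)) ^ q := by
          apply lintegral_mono
          intro x
          apply ENNReal.rpow_le_rpow _ hq0.le
          exact le_trans (gns_one hvdiff h2v x) hI
      _ = (c * Eng ^ ((1:ℝ)/p)) ^ q * volume (closedBall m (ρ/2)) := setLIntegral_const _ _
      _ = (V * c ^ q) * Eng ^ (q/p) := by
          rw [Real.volume_pi_closedBall m (by linarith), ENNReal.mul_rpow_of_nonneg _ _ hq0.le,
            ← ENNReal.rpow_mul, one_div_mul_eq_div]
          have : (Fintype.card (Fin 1)) = 1 := by simp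
          rw [this, ← hV]
          ring
  · -- case 2 ≤ n
    have hn2' : (2:ℝ) ≤ (n:ℝ) := by exact_mod_cast hn2
    -- choose the exponent r
    obtain ⟨r, hr1, hrn, hrp, hqr'⟩ :
        ∃ r : ℝ, 1 < r ∧ r < (n:ℝ) ∧ r ≤ p ∧ q ≤ (n:ℝ) * r / ((n:ℝ) - r) := by
      by_cases hpn : p < (n:ℝ)
      · exact ⟨p, hp, hpn, le_rfl, (hq_sub hpn).le⟩
      · push_neg at hpn
        set N : ℝ := (n:ℝ) with hN
        refine ⟨N * (q + N) / (2 * N + q), ?_, ?_, ?_, ?_⟩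
        · rw [lt_div_iff₀ (by linarith)]
          nlinarith
        · rw [div_lt_iff₀ (by linarith)]
          nlinarith
        · have hle : N * (q + N) / (2 * N + q) ≤ N := by
            rw [div_le_iff₀ (by linarith)]; nlinarith
          linarith
        · have h1 : N - N * (q + N) / (2 * N + q) = N * N / (2 * N + q) := by
            field_simp; ring
          have h2 : N * (N * (q + N) / (2 * N + q)) / (N - N * (q + N) / (2 * N + q)) = q + N := by
            rw [h1]
            have hd : (2 * N + q) ≠ 0 := by linarith
            have hN0 : N ≠ 0 := by linarith
            field_simp
          rw [h2]; linarith
    have hr0 : (0:ℝ) < r := lt_trans one_pos hr1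
    have hnr : (0:ℝ) < (n:ℝ) - r := by linarith
    set r' : ℝ := (n:ℝ) * r / ((n:ℝ) - r) with hr'
    have hr'0 : 0 < r' := by rw [hr']; positivity
    set γ : ℝ≥0∞ := ENNReal.ofReal (r * ((n:ℝ) - 1) / ((n:ℝ) - r)) with hγ
    obtain ⟨c, hctop, hc⟩ := cutoff_est (n := n) (r := r) hp hρ hr1.le hrp
    set V : ℝ≥0∞ := ENNReal.ofReal ((2 * ρ) ^ n) with hV
    refine ⟨γ ^ q * c ^ (q/r) * V ^ (1 - q/r'), ?_, ?_⟩
    · apply ENNReal.mul_ne_top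
      apply ENNReal.mul_ne_top
      · exact (ENNReal.rpow_lt_top_of_nonneg hq0.le ENNReal.ofReal_ne_top).ne
      · exact (ENNReal.rpow_lt_top_of_nonneg (by positivity) hctop).ne
      · refine (ENNReal.rpow_lt_top_of_nonneg ?_ ENNReal.ofReal_ne_top).ne
        simp only [sub_nonneg]
        exact div_le_one_of_le₀ hqr' hr'0.le
    intro u hu m
    obtain ⟨v, hvdiff, h2v, hagree, hbound⟩ := hc u hu m
    set Eng : ℝ≥0∞ := ∫⁻ x in closedBall m ρ,
        ((‖fderiv ℝ u x‖₊ : ℝ≥0∞) ^ p + (‖u x‖₊ : ℝ≥0∞) ^ p) with hEng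
    have hcard : (Fintype.card (Fin n) : ℝ) = (n : ℝ) := by simp
    have hgns := gns_r (ι := Fin n) (r := r) (by rw [hcard] at *; exact hr1)
      (by rw [hcard]; exact hrn) hvdiff h2v
    rw [hcard] at hgns
    -- A_v ≤ γ^{r'} * B_v^{r'/r}
    have hA : ∫⁻ x, (‖v x‖₊ : ℝ≥0∞) ^ r' ≤ γ ^ r' * ((c * Eng ^ (r/p)) ^ (r'/r)) := by
      refine le_trans hgns ?_
      rw [← hr', ← hγ]
      exact mul_le_mul_right (ENNReal.rpow_le_rpow hbound (by positivity)) _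
    calc ∫⁻ x in closedBall m (ρ/2), (‖u x‖₊ : ℝ≥0∞) ^ q
        = ∫⁻ x in closedBall m (ρ/2), (‖v x‖₊ : ℝ≥0∞) ^ q := by
          apply setLIntegral_congr_fun measurableSet_closedBall
          intro x hx
          simp only [hagree x hx]
      _ ≤ ∫⁻ x in closedBall m ρ, (‖v x‖₊ : ℝ≥0∞) ^ q :=
          lintegral_mono_set (closedBall_subset_closedBall (by linarith))
      _ ≤ (∫⁻ x in closedBall m ρ, (‖v x‖₊ : ℝ≥0∞) ^ r') ^ (q/r') *
            ((volume.restrict (closedBall m ρ)) univ) ^ (1 - q/r') :=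
          holder_exp _ (hvdiff.continuous.measurable.nnnorm.coe_nnreal_ennreal.aemeasurable)
            hq0 hqr'
      _ ≤ (γ ^ r' * ((c * Eng ^ (r/p)) ^ (r'/r))) ^ (q/r') * V ^ (1 - q/r') := by
          refine mul_le_mul' (ENNReal.rpow_le_rpow ?_ (by positivity))
            (ENNReal.rpow_le_rpow (le_of_eq ?_) (by simp; exact div_le_one_of_le₀ hqr' hr'0.le))
          · refine le_trans (lintegral_mono_set (subset_univ _)) ?_
            rw [Measure.restrict_univ]
            exact hA
          · rw [Measure.restrict_apply_univ, Real.volume_pi_closedBall m hρ.le, hV,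
              Fintype.card_fin]
      _ = γ ^ q * c ^ (q/r) * V ^ (1 - q/r') * Eng ^ (q/p) := by
          rw [ENNReal.mul_rpow_of_nonneg _ _ (by positivity : (0:ℝ) ≤ q/r'),
            ENNReal.mul_rpow_of_nonneg _ _ (by positivity : (0:ℝ) ≤ r'/r),
            ENNReal.mul_rpow_of_nonneg _ _ (by positivity : (0:ℝ) ≤ q/r'),
            ← ENNReal.rpow_mul, ← ENNReal.rpow_mul, ← ENNReal.rpow_mul, ← ENNReal.rpow_mul]
          have e1 : r' * (q/r') = q := by field_simp
          have e2 : r'/r * (q/r') = q/r := by field_simp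
          rw [e1, e2]
          rw [show r/p * (q/r) = q/p by field_simp]
          ring


lemma count_overlap {n : ℕ} {ρ : ℝ} (hρ : 0 < ρ) (y : Fin n → ℝ) (h : ℝ≥0∞) :
    ∑' z : Fin n → ℤ,
      (closedBall (fun i => (z i : ℝ) * ρ + ρ/2) ρ).indicator (fun _ => h) y ≤ 3^n * h := by
  classical
  set Zy : Finset (Fin n → ℤ) :=
    Fintype.piFinset (fun i => Finset.Icc (⌈y i / ρ⌉ - 2) (⌈y i / ρ⌉)) with hZy
  have hout : ∀ z ∉ Zy, (closedBall (fun i => (z i : ℝ) * ρ + ρ/2) ρ).indicator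
      (fun _ => h) y = 0 := by
    intro z hz
    rw [indicator_of_notMem]
    intro hy
    apply hz
    rw [hZy, Fintype.mem_piFinset]
    intro i
    rw [mem_closedBall] at hy
    have hi : dist (y i) ((z i : ℝ) * ρ + ρ/2) ≤ ρ := (dist_pi_le_iff hρ.le).mp hy i
    rw [Real.dist_eq, abs_le] at hi
    have hceil1 : y i / ρ ≤ (⌈y i / ρ⌉ : ℝ) := Int.le_ceil _
    have hceil2 : (⌈y i / ρ⌉ : ℝ) < y i / ρ + 1 := Int.ceil_lt_add_one _
    have hzup : (z i : ℝ) ≤ y i / ρ + 1/2 := by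
      rw [← mul_le_mul_iff_left₀ hρ]
      have he : (y i / ρ + 1/2) * ρ = y i + ρ/2 := by field_simp
      rw [he]; linarith [hi.1]
    have hzlo : y i / ρ - 3/2 ≤ (z i : ℝ) := by
      rw [← mul_le_mul_iff_left₀ hρ]
      have he : (y i / ρ - 3/2) * ρ = y i - 3*ρ/2 := by field_simp
      rw [he]; linarith [hi.2]
    rw [Finset.mem_Icc]
    constructor
    · have : ((⌈y i / ρ⌉ - 2 : ℤ) : ℝ) - 1 < (z i : ℝ) := by push_cast; linarith
      have h2 : (⌈y i / ρ⌉ - 2 : ℤ) - 1 < z i := by exact_mod_cast this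
      omega
    · have : (z i : ℝ) < (⌈y i / ρ⌉ : ℝ) + 1 := by linarith
      have h2 : z i < ⌈y i / ρ⌉ + 1 := by exact_mod_cast this
      omega
  rw [tsum_eq_sum hout]
  calc ∑ z ∈ Zy, (closedBall (fun i => (z i : ℝ) * ρ + ρ/2) ρ).indicator (fun _ => h) y
      ≤ ∑ _z ∈ Zy, h := by
        apply Finset.sum_le_sum
        intro z _
        exact indicator_le_self' (fun _ _ => zero_le) y
    _ = Zy.card * h := by rw [Finset.sum_const, nsmul_eq_mul]
    _ ≤ 3^n * h := by
        apply mul_le_mul_left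
        have : Zy.card = 3^n := by
          rw [hZy, Fintype.card_piFinset]
          have : ∀ i : Fin n, (Finset.Icc (⌈y i / ρ⌉ - 2) (⌈y i / ρ⌉)).card = 3 := by
            intro i
            rw [Int.card_Icc]
            omega
          simp [this]
        rw [this]
        norm_cast

end helpers

section main
open scoped ENNReal NNReal
open Function

/-- The 'no vanishing implies no mass' lemma: let `1 < p < q < p*`. If `(u_j)` is bounded
in `W^{1,p}(ℝⁿ)`, `ω ⊆ ℝⁿ` is open, and for some `ρ > 0` one has
`sup_{x ∈ ω} ∫_{B(x,ρ)} |u_j|^q → 0`, then `∫_ω |u_j|^q → 0`. -/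
theorem no_vanishing
    (n : ℕ) (hn : 1 ≤ n) (p q : ℝ) (hp : 1 < p) (hpq : p < q)
    (hq_sub : p < n → q < n * p / (n - p))
    (u : ℕ → (Fin n → ℝ) → ℝ)
    (hu_diff : ∀ j, Differentiable ℝ (u j))
    (hu_W : ∀ j, Integrable (fun x => ‖fderiv ℝ (u j) x‖ ^ p + |u j x| ^ p))
    (hu_Lq : ∀ j, Integrable (fun x => |u j x| ^ q))
    (hbdd : ∃ M : ℝ, ∀ j, (∫ x, (‖fderiv ℝ (u j) x‖ ^ p + |u j x| ^ p)) ≤ M)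
    (ω : Set (Fin n → ℝ)) (hω : IsOpen ω)
    (ρ : ℝ) (hρ : 0 < ρ)
    (hvanish : Tendsto (fun j => ⨆ x ∈ ω, ∫ y in ball x ρ, |u j y| ^ q) atTop (nhds 0)) :
    Tendsto (fun j => ∫ x in ω, |u j x| ^ q) atTop (nhds 0) := by
  classical
  have hp0 : (0:ℝ) < p := lt_trans one_pos hp
  have hq0 : (0:ℝ) < q := lt_trans hp0 hpq
  have hθ0 : (0:ℝ) < 1 - p/q := by
    have : p/q < 1 := (div_lt_one hq0).mpr hpq
    linarith
  have hpq0 : (0:ℝ) < p/q := by positivity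
  set θ : ℝ := 1 - p/q with hθ
  rcases eq_empty_or_nonempty ω with hωe | ⟨x₀, hx₀⟩
  · simpa [hωe] using (tendsto_const_nhds : Tendsto (fun _ : ℕ => (0:ℝ)) atTop (nhds 0))
  obtain ⟨M, hM⟩ := hbdd
  obtain ⟨Cloc, hCloctop, hCloc⟩ := local_est hn hp hpq hq_sub hρ
  -- pointwise conversion
  have hptw : ∀ w : ℝ, ENNReal.ofReal (|w| ^ q) = (‖w‖₊ : ℝ≥0∞) ^ q := by
    intro w
    rw [← ENNReal.ofReal_rpow_of_nonneg (abs_nonneg _) hq0.le]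
    congr 1
    rw [← Real.norm_eq_abs, ofReal_norm_eq_coe_nnnorm]
  have hptwp : ∀ w : ℝ, ENNReal.ofReal (|w| ^ p) = (‖w‖₊ : ℝ≥0∞) ^ p := by
    intro w
    rw [← ENNReal.ofReal_rpow_of_nonneg (abs_nonneg _) hp0.le]
    congr 1
    rw [← Real.norm_eq_abs, ofReal_norm_eq_coe_nnnorm]
  -- δⱼ and its properties
  set δ : ℕ → ℝ := fun j => ⨆ x ∈ ω, ∫ y in ball x ρ, |u j y| ^ q with hδ
  have hbdda : ∀ j, BddAbove (range fun x => ⨆ _ : x ∈ ω, ∫ y in ball x ρ, |u j y| ^ q) := by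
    intro j
    refine ⟨max 0 (∫ y, |u j y| ^ q), ?_⟩
    rintro _ ⟨x, rfl⟩
    dsimp only
    by_cases hx : x ∈ ω
    · rw [ciSup_pos hx]
      refine le_max_of_le_right ?_
      exact setIntegral_le_integral (hu_Lq j) (Eventually.of_forall fun y => by positivity)
    · haveI : IsEmpty (x ∈ ω) := ⟨hx⟩
      rw [Real.iSup_of_isEmpty]
      exact le_max_left _ _
  have hδle : ∀ j, ∀ x ∈ ω, (∫ y in ball x ρ, |u j y| ^ q) ≤ δ j := by
    intro j x hx
    have h1 := le_ciSup (hbdda j) x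
    rwa [ciSup_pos hx] at h1
  have hδnn : ∀ j, 0 ≤ δ j := by
    intro j
    refine le_trans ?_ (hδle j x₀ hx₀)
    exact integral_nonneg fun y => by positivity
  -- cubes
  set Cz : (Fin n → ℤ) → Set (Fin n → ℝ) :=
    fun z => univ.pi (fun i => Ico ((z i : ℝ) * ρ) ((z i : ℝ) * ρ + ρ)) with hCz
  set mz : (Fin n → ℤ) → (Fin n → ℝ) := fun z i => (z i : ℝ) * ρ + ρ/2 with hmz
  have hcover : ∀ y : Fin n → ℝ, ∃ z, y ∈ Cz z := by
    intro y
    refine ⟨fun i => ⌊y i / ρ⌋, ?_⟩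
    intro i _
    constructor
    · calc ((⌊y i / ρ⌋ : ℝ)) * ρ ≤ (y i / ρ) * ρ :=
          mul_le_mul_of_nonneg_right (Int.floor_le _) hρ.le
        _ = y i := div_mul_cancel₀ _ hρ.ne'
    · calc y i = (y i / ρ) * ρ := (div_mul_cancel₀ _ hρ.ne').symm
        _ < ((⌊y i / ρ⌋ : ℝ) + 1) * ρ :=
          mul_lt_mul_of_pos_right (Int.lt_floor_add_one _) hρ
        _ = (⌊y i / ρ⌋ : ℝ) * ρ + ρ := by ring
  have hball : ∀ z, ∀ x ∈ Cz z, Cz z ⊆ ball x ρ := by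
    intro z x hx y hy
    rw [mem_ball]
    rw [dist_pi_lt_iff hρ]
    intro i
    have h1 := hx i (mem_univ i)
    have h2 := hy i (mem_univ i)
    rw [Real.dist_eq, abs_lt]
    constructor <;> [skip; skip] <;> simp only [mem_Ico] at h1 h2 <;> cases h1 <;> cases h2 <;> linarith
  have hcb : ∀ z, Cz z ⊆ closedBall (mz z) (ρ/2) := by
    intro z y hy
    rw [mem_closedBall]
    rw [dist_pi_le_iff (by linarith)]
    intro i
    have h2 := hy i (mem_univ i)
    simp only [mem_Ico] at h2
    rw [Real.dist_eq, hmz, abs_le]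
    constructor <;> cases h2 <;> simp only [] <;> linarith
  -- the index set
  set S : Set (Fin n → ℤ) := {z | (Cz z ∩ ω).Nonempty} with hS
  have hxz : ∀ z : S, ∃ x, x ∈ Cz z.1 ∩ ω := fun z => z.2
  choose xz hxzmem using hxz
  -- energy quantities
  set G : ℕ → (Fin n → ℝ) → ℝ≥0∞ :=
    fun j x => (‖fderiv ℝ (u j) x‖₊ : ℝ≥0∞) ^ p + (‖u j x‖₊ : ℝ≥0∞) ^ p with hG
  have hGmeas : ∀ j, Measurable (G j) := by
    intro j
    exact ((measurable_fderiv ℝ (u j)).nnnorm.coe_nnreal_ennreal.pow_const _).add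
      (((hu_diff j).continuous.measurable.nnnorm.coe_nnreal_ennreal).pow_const _)
  have hGle : ∀ j, ∫⁻ x, G j x ≤ ENNReal.ofReal M := by
    intro j
    have h1 : ENNReal.ofReal (∫ x, (‖fderiv ℝ (u j) x‖ ^ p + |u j x| ^ p)) = ∫⁻ x, G j x := by
      rw [ofReal_integral_eq_lintegral_ofReal (hu_W j)
        (Eventually.of_forall fun x => by positivity)]
      congr 1 with x
      rw [ENNReal.ofReal_add (by positivity) (by positivity), hG]
      congr 1
      · rw [← ENNReal.ofReal_rpow_of_nonneg (norm_nonneg _) hp0.le, ofReal_norm_eq_coe_nnnorm]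
      · exact hptwp _
    rw [← h1]
    exact ENNReal.ofReal_le_ofReal (hM j)
  -- the key estimate
  set K2 : ℝ≥0∞ := Cloc ^ (p/q) * (3^n * ENNReal.ofReal M) with hK2
  have hK2top : K2 ≠ ⊤ := by
    apply ENNReal.mul_ne_top
    · exact (ENNReal.rpow_lt_top_of_nonneg hpq0.le hCloctop).ne
    · exact ENNReal.mul_ne_top (by simp) ENNReal.ofReal_ne_top
  have key : ∀ j, (∫⁻ x in ω, (‖u j x‖₊ : ℝ≥0∞) ^ q) ≤ ENNReal.ofReal (δ j) ^ θ * K2 := by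
    intro j
    have hsub : ω ⊆ ⋃ z : S, (Cz z.1 ∩ ω) := by
      intro y hy
      obtain ⟨z, hz⟩ := hcover y
      exact mem_iUnion.mpr ⟨⟨z, ⟨y, hz, hy⟩⟩, ⟨hz, hy⟩⟩
    -- per cube bound
    have hper : ∀ z : S, (∫⁻ x in Cz z.1 ∩ ω, (‖u j x‖₊ : ℝ≥0∞) ^ q) ≤
        ENNReal.ofReal (δ j) ^ θ * (Cloc ^ (p/q) * (∫⁻ x in closedBall (mz z.1) ρ, G j x)) := by
      intro z
      set tz : ℝ≥0∞ := ∫⁻ x in Cz z.1 ∩ ω, (‖u j x‖₊ : ℝ≥0∞) ^ q with htz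
      have hball' : tz ≤ ENNReal.ofReal (δ j) := by
        have hsub2 : Cz z.1 ∩ ω ⊆ ball (xz z) ρ :=
          (inter_subset_left).trans (hball z.1 (xz z) (hxzmem z).1)
        calc tz ≤ ∫⁻ x in ball (xz z) ρ, (‖u j x‖₊ : ℝ≥0∞) ^ q := lintegral_mono_set hsub2
          _ = ENNReal.ofReal (∫ y in ball (xz z) ρ, |u j y| ^ q) := by
              rw [ofReal_integral_eq_lintegral_ofReal ((hu_Lq j).integrableOn)
                (Eventually.of_forall fun y => by positivity)]
              congr 1 with y
              exact (hptw _).symm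
          _ ≤ ENNReal.ofReal (δ j) := ENNReal.ofReal_le_ofReal (hδle j (xz z) (hxzmem z).2)
      have hsob : tz ≤ Cloc * (∫⁻ x in closedBall (mz z.1) ρ, G j x) ^ (q/p) := by
        calc tz ≤ ∫⁻ x in closedBall (mz z.1) (ρ/2), (‖u j x‖₊ : ℝ≥0∞) ^ q :=
              lintegral_mono_set ((inter_subset_left).trans (hcb z.1))
          _ ≤ _ := hCloc (u j) (hu_diff j) (mz z.1)
      have htztop : tz ≠ ⊤ := (lt_of_le_of_lt hball' ENNReal.ofReal_lt_top).ne
      calc tz = tz ^ θ * tz ^ (p/q) := by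
            rw [← ENNReal.rpow_add_of_nonneg θ (p/q) hθ0.le hpq0.le]
            rw [hθ]
            norm_num
          _ ≤ ENNReal.ofReal (δ j) ^ θ *
              (Cloc * (∫⁻ x in closedBall (mz z.1) ρ, G j x) ^ (q/p)) ^ (p/q) :=
            mul_le_mul' (ENNReal.rpow_le_rpow hball' hθ0.le)
              (ENNReal.rpow_le_rpow hsob hpq0.le)
          _ = ENNReal.ofReal (δ j) ^ θ *
              (Cloc ^ (p/q) * (∫⁻ x in closedBall (mz z.1) ρ, G j x)) := by
            rw [ENNReal.mul_rpow_of_nonneg _ _ hpq0.le, ← ENNReal.rpow_mul]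
            rw [show q/p * (p/q) = 1 by field_simp]
            rw [ENNReal.rpow_one]
    -- sum of the energies
    have hsum : ∑' z : S, (∫⁻ x in closedBall (mz z.1) ρ, G j x) ≤ 3^n * ENNReal.ofReal M := by
      calc ∑' z : S, (∫⁻ x in closedBall (mz z.1) ρ, G j x)
          ≤ ∑' z : Fin n → ℤ, (∫⁻ x in closedBall (mz z) ρ, G j x) :=
            ENNReal.tsum_comp_le_tsum_of_injective Subtype.val_injective _
        _ = ∑' z : Fin n → ℤ, ∫⁻ y, (closedBall (mz z) ρ).indicator (G j) y := by
            congr 1 with z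
            rw [lintegral_indicator measurableSet_closedBall]
        _ = ∫⁻ y, ∑' z : Fin n → ℤ, (closedBall (mz z) ρ).indicator (G j) y :=
            (lintegral_tsum fun z => ((hGmeas j).indicator measurableSet_closedBall).aemeasurable).symm
        _ ≤ ∫⁻ y, 3^n * G j y := by
            apply lintegral_mono
            intro y
            have := count_overlap hρ y (G j y)
            refine le_trans (le_of_eq ?_) this
            exact tsum_congr fun z => by simp [Set.indicator_apply, hmz]
        _ = 3^n * ∫⁻ y, G j y := lintegral_const_mul' _ _ (by simp)
        _ ≤ 3^n * ENNReal.ofReal M := mul_le_mul_right (hGle j) _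
    calc ∫⁻ x in ω, (‖u j x‖₊ : ℝ≥0∞) ^ q
        ≤ ∫⁻ x in ⋃ z : S, (Cz z.1 ∩ ω), (‖u j x‖₊ : ℝ≥0∞) ^ q := lintegral_mono_set hsub
      _ ≤ ∑' z : S, ∫⁻ x in Cz z.1 ∩ ω, (‖u j x‖₊ : ℝ≥0∞) ^ q := lintegral_iUnion_le _ _
      _ ≤ ∑' z : S, ENNReal.ofReal (δ j) ^ θ *
            (Cloc ^ (p/q) * (∫⁻ x in closedBall (mz z.1) ρ, G j x)) :=
          ENNReal.tsum_le_tsum hper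
      _ = ENNReal.ofReal (δ j) ^ θ * Cloc ^ (p/q) *
            ∑' z : S, (∫⁻ x in closedBall (mz z.1) ρ, G j x) := by
          rw [← ENNReal.tsum_mul_left]
          exact tsum_congr fun z => by ring
      _ ≤ ENNReal.ofReal (δ j) ^ θ * Cloc ^ (p/q) * (3^n * ENNReal.ofReal M) :=
          mul_le_mul_right hsum _
      _ = ENNReal.ofReal (δ j) ^ θ * K2 := by rw [hK2]; ring
  -- convert to real integrals
  have hTeq : ∀ j, ∫ x in ω, |u j x| ^ q = (∫⁻ x in ω, (‖u j x‖₊ : ℝ≥0∞) ^ q).toReal := by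
    intro j
    rw [integral_eq_lintegral_of_nonneg_ae (Eventually.of_forall fun x => by positivity)
      (((hu_diff j).continuous.abs.rpow_const (fun x => Or.inr hq0.le)).aestronglyMeasurable)]
    congr 1
    congr 1 with x
    exact hptw _
  have hfinal : ∀ j, ∫ x in ω, |u j x| ^ q ≤ K2.toReal * δ j ^ θ := by
    intro j
    rw [hTeq j]
    have h2 : (ENNReal.ofReal (δ j) ^ θ * K2).toReal = δ j ^ θ * K2.toReal := by
      rw [ENNReal.toReal_mul]
      congr 1
      rw [← ENNReal.toReal_rpow, ENNReal.toReal_ofReal (hδnn j)]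
    calc (∫⁻ x in ω, (‖u j x‖₊ : ℝ≥0∞) ^ q).toReal
        ≤ (ENNReal.ofReal (δ j) ^ θ * K2).toReal := by
          apply ENNReal.toReal_mono
          · exact ENNReal.mul_ne_top
              (ENNReal.rpow_ne_top_of_nonneg hθ0.le ENNReal.ofReal_ne_top) hK2top
          · exact key j
      _ = K2.toReal * δ j ^ θ := by rw [h2]; ring
  -- squeeze
  have h0 : ∀ j, 0 ≤ ∫ x in ω, |u j x| ^ q := by
    intro j
    exact integral_nonneg fun x => by positivity
  have hlim : Tendsto (fun j => K2.toReal * δ j ^ θ) atTop (nhds 0) := by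
    have h1 : Tendsto (fun j => δ j ^ θ) atTop (nhds 0) := by
      have hc : ContinuousAt (fun s : ℝ => s ^ θ) 0 :=
        Real.continuousAt_rpow_const 0 θ (Or.inr hθ0.le)
      have h2 := hc.tendsto.comp hvanish
      simpa [Real.zero_rpow hθ0.ne', Function.comp_def] using h2
    have := h1.const_mul K2.toReal
    simpa using this
  exact tendsto_of_tendsto_of_tendsto_of_le_of_le tendsto_const_nhds hlim h0 hfinal

end main
end

section
/- Let Ω ⊆ ℝⁿ be a domain, 1 < p < q < ∞, and let a, b, c ∈ W^{1,p}(Ω) ∩ L^q(Ω) have pairwise disjoint (separated) supports, with b ≢ 0, c ≢ 0, and suppose ‖b‖_{W^{1,p}}^p / ‖b‖_{L^q}^q ≥ ‖c‖_{W^{1,p}}^p / ‖c‖_{L^q}^q. Define u = a + b + c and U = a + t·c where t = (‖b‖_{L^q}^q + ‖c‖_{L^q}^q)^{1/q} / ‖c‖_{L^q}. Then ∫_Ω |U|^q = ∫_Ω |u|^q and ‖U‖_{W^{1,p}}^p < ‖u‖_{W^{1,p}}^p. -/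
open MeasureTheory Set Function


open MeasureTheory Set Function Filter Metric Topology ENNReal

variable {E : Type*} [NormedAddCommGroup E] [NormedSpace ℝ E] [MeasurableSpace E]
  [BorelSpace E] [FiniteDimensional ℝ E] (μ : Measure E) [μ.IsAddHaarMeasure]

/-- At a point where `f` vanishes, is differentiable with nonzero derivative, the zero set of `f`
cannot have density 1. -/
lemma not_tendsto_density_one {f : E → ℝ} {s : Set E} (hs : s ⊆ {y | f y = 0}) {x : E}
    (hdiff : DifferentiableAt ℝ f x) (hx0 : f x = 0) (hD : fderiv ℝ f x ≠ 0) :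
    ¬ Filter.Tendsto (fun r => μ (s ∩ closedBall x r) / μ (closedBall x r)) (𝓝[>] 0) (𝓝 1) := by
  intro hT
  set D := fderiv ℝ f x with hDdef
  -- find a unit vector with nonzero derivative
  obtain ⟨v, hv⟩ : ∃ v, D v ≠ 0 := by
    by_contra h
    push_neg at h
    exact hD (ContinuousLinearMap.ext fun v => by simpa using h v)
  have hvne : v ≠ 0 := fun h => hv (by simp [h])
  set v' : E := ‖v‖⁻¹ • v with hv'def
  have hv' : ‖v'‖ = 1 := norm_smul_inv_norm hvne
  set κ : ℝ := |D v'| with hκdef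
  have hκ : 0 < κ := by
    have : D v' = ‖v‖⁻¹ * D v := by simp [hv'def]
    have hne : D v' ≠ 0 := by
      rw [this]
      exact mul_ne_zero (inv_ne_zero (norm_ne_zero_iff.2 hvne)) hv
    exact abs_pos.2 hne
  set M : ℝ := ‖D‖ with hMdef
  have hκM : κ ≤ M := by
    have := D.le_opNorm v'
    rwa [hv', mul_one, Real.norm_eq_abs] at this
  have hM : 0 < M := lt_of_lt_of_le hκ hκM
  set ε : ℝ := κ / (4 * M) with hεdef
  have hε : 0 < ε := div_pos hκ (by linarith)
  have hε1 : ε ≤ 1 := by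
    rw [hεdef, div_le_one (by linarith)]
    linarith
  -- little-o estimate
  have ho := hdiff.hasFDerivAt.isLittleO
  have h4 : (0:ℝ) < κ/4 := by linarith
  obtain ⟨ρ, hρ, hball⟩ := Metric.eventually_nhds_iff.1 (ho.def h4)
  -- key: f does not vanish on small shifted balls
  have key : ∀ t : ℝ, 0 < t → t < ρ/2 → ∀ y ∈ closedBall (x + t • v') (ε*t), f y ≠ 0 := by
    intro t ht htρ y hy
    have hyx' : ‖y - x - t • v'‖ ≤ ε * t := by
      have := mem_closedBall.1 hy
      rwa [dist_eq_norm, sub_add_eq_sub_sub] at this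
    have hyx : ‖y - x‖ ≤ 2 * t := by
      have h1 : ‖y - x‖ ≤ ‖y - x - t • v'‖ + ‖t • v'‖ := by
        simpa using norm_sub_le_norm_sub_add_norm_sub (y - x) (t • v') 0 |>.trans (by simp)
      have h2 : ‖t • v'‖ = t := by rw [norm_smul, hv', mul_one, Real.norm_eq_abs, abs_of_pos ht]
      nlinarith
    have hlt : dist y x < ρ := by
      rw [dist_eq_norm]; linarith
    have hest : |f y - f x - D (y - x)| ≤ κ/4 * ‖y - x‖ := by
      have := hball hlt
      simpa [Real.norm_eq_abs] using this
    -- lower bound for |D (y - x)|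
    have hsplit : D (y - x) = D (y - x - t • v') + t * D v' := by
      have h : (y - x - t • v') + t • v' = y - x := by abel
      calc D (y - x) = D ((y - x - t • v') + t • v') := by rw [h]
        _ = D (y - x - t • v') + t * D v' := by rw [map_add, D.map_smul, smul_eq_mul]
    have hb1 : |D (y - x - t • v')| ≤ κ/4 * t := by
      have h1 := D.le_opNorm (y - x - t • v')
      have h2 : M * ‖y - x - t • v'‖ ≤ M * (ε * t) :=
        mul_le_mul_of_nonneg_left hyx' hM.le
      have h3 : M * (ε * t) = κ/4 * t := by
        rw [hεdef]; field_simp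
      calc |D (y - x - t • v')| = ‖D (y - x - t • v')‖ := (Real.norm_eq_abs _).symm
        _ ≤ M * ‖y - x - t • v'‖ := h1
        _ ≤ M * (ε * t) := h2
        _ = κ/4 * t := h3
    have hB : |t * D v'| = t * κ := by
      rw [abs_mul, abs_of_pos ht, hκdef]
    have habs : |t * D v'| - |D (y - x - t • v')| ≤ |D (y - x)| := by
      rw [hsplit]
      have h := abs_sub_abs_le_abs_sub (t * D v') (-(D (y - x - t • v')))
      rw [abs_neg, sub_neg_eq_add, add_comm] at h
      linarith
    have hlow : t * κ - κ/4 * t ≤ |D (y - x)| := by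
      rw [hB] at habs; linarith
    intro hfy
    replace hest : |D (y - x)| ≤ κ/4 * ‖y - x‖ := by
      have h9 : f y - f x - D (y - x) = -(D (y - x)) := by rw [hfy, hx0]; ring
      rwa [h9, abs_neg] at hest
    have hub : |D (y - x)| ≤ κ/4 * (2*t) := by
      have := mul_le_mul_of_nonneg_left hyx (le_of_lt h4)
      linarith
    linarith [mul_pos ht hκ]
  -- measure estimate
  set c : ℝ≥0∞ := ENNReal.ofReal ((ε/(1+ε))^(Module.finrank ℝ E)) with hcdef
  have h1ε : (0:ℝ) < 1 + ε := by linarith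
  have hc0 : c ≠ 0 := by
    rw [hcdef]
    exact (ENNReal.ofReal_pos.2 (pow_pos (div_pos hε h1ε) _)).ne'
  set R : ℝ := (1+ε) * (ρ/2) with hRdef
  have hR : 0 < R := by positivity
  have hbound : ∀ r : ℝ, 0 < r → r < R →
      μ (s ∩ closedBall x r) / μ (closedBall x r) ≤ 1 - c := by
    intro r hr hrR
    set t : ℝ := r / (1+ε) with htdef
    have ht : 0 < t := div_pos hr h1ε
    have htρ : t < ρ/2 := by
      rw [htdef, div_lt_iff₀ h1ε]
      rw [hRdef] at hrR
      linarith
    set B' := closedBall (x + t • v') (ε*t) with hB'def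
    have htv' : ‖t • v'‖ = t := by
      rw [norm_smul, hv', mul_one, Real.norm_eq_abs, abs_of_pos ht]
    have hsub : B' ⊆ closedBall x r := by
      apply closedBall_subset_closedBall'
      have hd : dist (x + t • v') x = t := by
        rw [dist_eq_norm, add_sub_cancel_left, htv']
      rw [hd]
      have : r = (1+ε) * t := by rw [htdef]; field_simp
      rw [this]; ring_nf; linarith [mul_le_mul_of_nonneg_left hε.le ht.le]
    have hdiff : s ∩ closedBall x r ⊆ closedBall x r \ B' := by
      rintro y ⟨hys, hyB⟩
      exact ⟨hyB, fun hyB' => key t ht htρ y hyB' (hs hys)⟩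
    have hfin : μ B' ≠ ⊤ := measure_closedBall_lt_top.ne
    have hVfin : μ (closedBall x r) ≠ ⊤ := measure_closedBall_lt_top.ne
    have hV0 : μ (closedBall x r) ≠ 0 := (measure_closedBall_pos μ x hr).ne'
    have hB'val : μ B' = c * μ (closedBall x r) := by
      rw [hB'def, Measure.addHaar_closedBall' μ _ (by positivity),
        Measure.addHaar_closedBall' μ x hr.le, hcdef, ← mul_assoc,
        ← ENNReal.ofReal_mul (by positivity)]
      congr 2
      rw [← mul_pow]
      congr 1
      rw [htdef]
      field_simp
    calc μ (s ∩ closedBall x r) / μ (closedBall x r)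
        ≤ μ (closedBall x r \ B') / μ (closedBall x r) :=
          ENNReal.div_le_div_right (measure_mono hdiff) _
      _ = (μ (closedBall x r) - μ B') / μ (closedBall x r) := by
          rw [measure_diff hsub measurableSet_closedBall.nullMeasurableSet hfin]
      _ = ((1 - c) * μ (closedBall x r)) / μ (closedBall x r) := by
          rw [hB'val, ENNReal.sub_mul (fun _ _ => hVfin), one_mul]
      _ = 1 - c := by
          rw [mul_div_assoc, ENNReal.div_self hV0 hVfin, mul_one]
  have hev : ∀ᶠ r in 𝓝[>] (0:ℝ),
      μ (s ∩ closedBall x r) / μ (closedBall x r) ≤ 1 - c := by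
    filter_upwards [Ioo_mem_nhdsGT_of_mem (Set.mem_Ico.2 ⟨le_refl (0:ℝ), hR⟩)] with r hr
    exact hbound r hr.1 hr.2
  have hle : (1:ℝ≥0∞) ≤ 1 - c := le_of_tendsto hT hev
  have hlt : (1:ℝ≥0∞) - c < 1 := ENNReal.sub_lt_self ENNReal.one_ne_top one_ne_zero hc0
  exact absurd hle hlt.not_ge

lemma ae_fderiv_zero [SecondCountableTopology E] {f : E → ℝ} {Ω : Set E} (hΩ : IsOpen Ω)
    (hf : DifferentiableOn ℝ f Ω) :
    ∀ᵐ x ∂(μ.restrict Ω), f x = 0 → fderiv ℝ f x = 0 := by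
  set s := Ω ∩ {y | f y = 0} with hsdef
  have hnull : μ ({x | ¬ Tendsto (fun r => μ (s ∩ closedBall x r) / μ (closedBall x r))
      (𝓝[>] 0) (𝓝 1)} ∩ s) = 0 := by
    have h := Besicovitch.ae_tendsto_measure_inter_div μ s
    rw [ae_iff] at h
    exact le_antisymm ((Measure.le_restrict_apply s _).trans h.le) zero_le
  rw [ae_restrict_iff' hΩ.measurableSet]
  rw [ae_iff]
  refine measure_mono_null ?_ hnull
  intro x hx
  simp only [mem_setOf_eq] at hx
  push_neg at hx
  obtain ⟨hxΩ, hx0, hD⟩ := hx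
  refine ⟨not_tendsto_density_one μ inter_subset_right
    (hf.differentiableAt (hΩ.mem_nhds hxΩ)) hx0 hD, hxΩ, hx0⟩

/-- The hump destruction lemma: let `Ω ⊆ ℝⁿ` be a domain, `1 < p < q < ∞`, and let
`a, b, c ∈ W^{1,p}(Ω) ∩ L^q(Ω)` have pairwise disjoint supports, with `b ≢ 0`, `c ≢ 0`
and `‖b‖_{W^{1,p}}^p / ‖b‖_{L^q}^q ≥ ‖c‖_{W^{1,p}}^p / ‖c‖_{L^q}^q`. Set `u = a + b + c`
and `U = a + t c`, `t = (‖b‖_{L^q}^q + ‖c‖_{L^q}^q)^{1/q} / ‖c‖_{L^q}`. Then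
`∫_Ω |U|^q = ∫_Ω |u|^q` and `‖U‖_{W^{1,p}}^p < ‖u‖_{W^{1,p}}^p`. -/
theorem hump_destruction
    (n : ℕ) (Ω : Set (Fin n → ℝ)) (hΩ_open : IsOpen Ω) (hΩ_conn : IsConnected Ω)
    (p q : ℝ) (hp : 1 < p) (hpq : p < q)
    (a b c : (Fin n → ℝ) → ℝ)
    (ha_diff : DifferentiableOn ℝ a Ω) (hb_diff : DifferentiableOn ℝ b Ω)
    (hc_diff : DifferentiableOn ℝ c Ω)
    (ha_W : IntegrableOn (fun x => ‖fderiv ℝ a x‖ ^ p + |a x| ^ p) Ω)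
    (hb_W : IntegrableOn (fun x => ‖fderiv ℝ b x‖ ^ p + |b x| ^ p) Ω)
    (hc_W : IntegrableOn (fun x => ‖fderiv ℝ c x‖ ^ p + |c x| ^ p) Ω)
    (ha_Lq : IntegrableOn (fun x => |a x| ^ q) Ω)
    (hb_Lq : IntegrableOn (fun x => |b x| ^ q) Ω)
    (hc_Lq : IntegrableOn (fun x => |c x| ^ q) Ω)
    (hab : Disjoint (support a) (support b))
    (hac : Disjoint (support a) (support c))
    (hbc : Disjoint (support b) (support c))
    (hb_ne : ∫ x in Ω, |b x| ^ q ≠ 0) (hc_ne : ∫ x in Ω, |c x| ^ q ≠ 0)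
    (hratio : (∫ x in Ω, (‖fderiv ℝ b x‖ ^ p + |b x| ^ p)) / (∫ x in Ω, |b x| ^ q)
        ≥ (∫ x in Ω, (‖fderiv ℝ c x‖ ^ p + |c x| ^ p)) / (∫ x in Ω, |c x| ^ q)) :
    letI t : ℝ := ((∫ x in Ω, |b x| ^ q) + (∫ x in Ω, |c x| ^ q)) ^ (1 / q)
        / (∫ x in Ω, |c x| ^ q) ^ (1 / q)
    letI u : (Fin n → ℝ) → ℝ := fun x => a x + b x + c x
    letI U : (Fin n → ℝ) → ℝ := fun x => a x + t * c x
    (∫ x in Ω, |U x| ^ q) = (∫ x in Ω, |u x| ^ q) ∧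
    (∫ x in Ω, (‖fderiv ℝ U x‖ ^ p + |U x| ^ p))
      < (∫ x in Ω, (‖fderiv ℝ u x‖ ^ p + |u x| ^ p)) := by
  have hq0 : (0:ℝ) < q := by linarith
  have hp0 : (0:ℝ) < p := by linarith
  have hq_ne : q ≠ 0 := hq0.ne'
  have hp_ne : p ≠ 0 := hp0.ne'
  set B := ∫ x in Ω, |b x| ^ q with hBdef
  set C := ∫ x in Ω, |c x| ^ q with hCdef
  set t : ℝ := (B + C) ^ (1 / q) / C ^ (1 / q) with htdef
  have hB_pos : 0 < B :=
    lt_of_le_of_ne (integral_nonneg fun x => Real.rpow_nonneg (abs_nonneg _) q) (Ne.symm hb_ne)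
  have hC_pos : 0 < C :=
    lt_of_le_of_ne (integral_nonneg fun x => Real.rpow_nonneg (abs_nonneg _) q) (Ne.symm hc_ne)
  have hBC_pos : 0 < B + C := by linarith
  have ht1 : 1 < t := by
    rw [htdef]
    rw [lt_div_iff₀ (Real.rpow_pos_of_pos hC_pos _), one_mul]
    exact Real.rpow_lt_rpow hC_pos.le (by linarith) (by positivity)
  have ht_pos : 0 < t := by linarith
  have htq : t ^ q = (B + C) / C := by
    rw [htdef, Real.div_rpow (Real.rpow_nonneg hBC_pos.le _) (Real.rpow_nonneg hC_pos.le _),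
      ← Real.rpow_mul hBC_pos.le, ← Real.rpow_mul hC_pos.le, one_div_mul_cancel hq_ne,
      Real.rpow_one, Real.rpow_one]
  -- pointwise decompositions for the q-integrals
  have hb0_of_a : ∀ x, a x ≠ 0 → b x = 0 := fun x h =>
    notMem_support.1 (disjoint_left.1 hab (mem_support.2 h))
  have hc0_of_a : ∀ x, a x ≠ 0 → c x = 0 := fun x h =>
    notMem_support.1 (disjoint_left.1 hac (mem_support.2 h))
  have hc0_of_b : ∀ x, b x ≠ 0 → c x = 0 := fun x h =>
    notMem_support.1 (disjoint_left.1 hbc (mem_support.2 h))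
  have hUq : ∀ x, |a x + t * c x| ^ q = |a x| ^ q + t ^ q * |c x| ^ q := by
    intro x
    rcases eq_or_ne (a x) 0 with ha0 | ha0
    · rw [ha0, zero_add, abs_mul, Real.mul_rpow (abs_nonneg t) (abs_nonneg _),
        abs_of_pos ht_pos]
      simp [Real.zero_rpow hq_ne]
    · rw [hc0_of_a x ha0]
      simp [Real.zero_rpow hq_ne]
  have huq : ∀ x, |a x + b x + c x| ^ q = |a x| ^ q + |b x| ^ q + |c x| ^ q := by
    intro x
    rcases eq_or_ne (a x) 0 with ha0 | ha0
    · rcases eq_or_ne (b x) 0 with hb0 | hb0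
      · simp [ha0, hb0, Real.zero_rpow hq_ne]
      · rw [hc0_of_b x hb0]
        simp [ha0, Real.zero_rpow hq_ne]
    · rw [hb0_of_a x ha0, hc0_of_a x ha0]
      simp [Real.zero_rpow hq_ne]
  constructor
  · -- equality of the q-integrals
    have hInt_tc : IntegrableOn (fun x => t ^ q * |c x| ^ q) Ω := hc_Lq.const_mul _
    have h1 : (∫ x in Ω, |a x + t * c x| ^ q)
        = (∫ x in Ω, |a x| ^ q) + t ^ q * C := by
      simp_rw [hUq]
      rw [integral_add ha_Lq hInt_tc, integral_const_mul]
    have h2 : (∫ x in Ω, |a x + b x + c x| ^ q)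
        = (∫ x in Ω, |a x| ^ q) + (B + C) := by
      have hInt_ab : IntegrableOn (fun x => |a x| ^ q + |b x| ^ q) Ω := ha_Lq.add hb_Lq
      simp_rw [huq]
      rw [integral_add hInt_ab hc_Lq, integral_add ha_Lq hb_Lq]
      ring
    rw [h1, h2, htq, div_mul_cancel₀ _ hC_pos.ne']
  · -- strict inequality for the W^{1,p}-integrals
    set AW := ∫ x in Ω, (‖fderiv ℝ a x‖ ^ p + |a x| ^ p) with hAWdef
    set BW := ∫ x in Ω, (‖fderiv ℝ b x‖ ^ p + |b x| ^ p) with hBWdef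
    set CW := ∫ x in Ω, (‖fderiv ℝ c x‖ ^ p + |c x| ^ p) with hCWdef
    have hae_a := ae_fderiv_zero (volume : Measure (Fin n → ℝ)) hΩ_open ha_diff
    have hae_b := ae_fderiv_zero (volume : Measure (Fin n → ℝ)) hΩ_open hb_diff
    have hae_c := ae_fderiv_zero (volume : Measure (Fin n → ℝ)) hΩ_open hc_diff
    have hmem := ae_restrict_mem hΩ_open.measurableSet (μ := (volume : Measure (Fin n → ℝ)))
    -- a.e. decomposition for u
    have hdec_u : ∀ᵐ x ∂(volume.restrict Ω),
        ‖fderiv ℝ (fun x => a x + b x + c x) x‖ ^ p + |a x + b x + c x| ^ p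
          = (‖fderiv ℝ a x‖ ^ p + |a x| ^ p) + (‖fderiv ℝ b x‖ ^ p + |b x| ^ p)
            + (‖fderiv ℝ c x‖ ^ p + |c x| ^ p) := by
      filter_upwards [hae_a, hae_b, hae_c, hmem] with x hA hB hC hxΩ
      have hda : DifferentiableAt ℝ a x := ha_diff.differentiableAt (hΩ_open.mem_nhds hxΩ)
      have hdb : DifferentiableAt ℝ b x := hb_diff.differentiableAt (hΩ_open.mem_nhds hxΩ)
      have hdc : DifferentiableAt ℝ c x := hc_diff.differentiableAt (hΩ_open.mem_nhds hxΩ)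
      have hfd : fderiv ℝ (fun x => a x + b x + c x) x
          = fderiv ℝ a x + fderiv ℝ b x + fderiv ℝ c x := by
        rw [fderiv_fun_add (hda.fun_add hdb) hdc, fderiv_fun_add hda hdb]
      rw [hfd]
      rcases eq_or_ne (a x) 0 with ha0 | ha0
      · rcases eq_or_ne (b x) 0 with hb0 | hb0
        · simp [ha0, hb0, hA ha0, hB hb0, Real.zero_rpow hp_ne]
        · simp [ha0, hc0_of_b x hb0, hA ha0, hC (hc0_of_b x hb0), Real.zero_rpow hp_ne]
      · simp [hb0_of_a x ha0, hc0_of_a x ha0, hB (hb0_of_a x ha0), hC (hc0_of_a x ha0),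
          Real.zero_rpow hp_ne]
    -- a.e. decomposition for U
    have hdec_U : ∀ᵐ x ∂(volume.restrict Ω),
        ‖fderiv ℝ (fun x => a x + t * c x) x‖ ^ p + |a x + t * c x| ^ p
          = (‖fderiv ℝ a x‖ ^ p + |a x| ^ p)
            + t ^ p * (‖fderiv ℝ c x‖ ^ p + |c x| ^ p) := by
      filter_upwards [hae_a, hae_c, hmem] with x hA hC hxΩ
      have hda : DifferentiableAt ℝ a x := ha_diff.differentiableAt (hΩ_open.mem_nhds hxΩ)
      have hdc : DifferentiableAt ℝ c x := hc_diff.differentiableAt (hΩ_open.mem_nhds hxΩ)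
      have hfd : fderiv ℝ (fun x => a x + t * c x) x
          = fderiv ℝ a x + t • fderiv ℝ c x := by
        rw [fderiv_fun_add hda (hdc.const_mul t), fderiv_const_mul hdc t]
      rw [hfd]
      rcases eq_or_ne (a x) 0 with ha0 | ha0
      · have hnorm : ‖fderiv ℝ a x + t • fderiv ℝ c x‖ = t * ‖fderiv ℝ c x‖ := by
          rw [hA ha0, zero_add, norm_smul, Real.norm_eq_abs, abs_of_pos ht_pos]
        rw [hnorm, ha0, zero_add, abs_mul, abs_of_pos ht_pos,
          Real.mul_rpow ht_pos.le (norm_nonneg _), Real.mul_rpow ht_pos.le (abs_nonneg _)]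
        simp [Real.zero_rpow hp_ne, hA ha0]
        ring
      · rw [hc0_of_a x ha0, hC (hc0_of_a x ha0)]
        simp [Real.zero_rpow hp_ne]
    have hW_u : (∫ x in Ω, (‖fderiv ℝ (fun x => a x + b x + c x) x‖ ^ p + |a x + b x + c x| ^ p))
        = AW + BW + CW := by
      have hInt_ab : IntegrableOn (fun x => (‖fderiv ℝ a x‖ ^ p + |a x| ^ p)
          + (‖fderiv ℝ b x‖ ^ p + |b x| ^ p)) Ω := ha_W.add hb_W
      rw [integral_congr_ae hdec_u, integral_add hInt_ab hc_W, integral_add ha_W hb_W]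
    have hW_U : (∫ x in Ω, (‖fderiv ℝ (fun x => a x + t * c x) x‖ ^ p + |a x + t * c x| ^ p))
        = AW + t ^ p * CW := by
      have hInt_tc : IntegrableOn (fun x => t ^ p * (‖fderiv ℝ c x‖ ^ p + |c x| ^ p)) Ω :=
        hc_W.const_mul _
      rw [integral_congr_ae hdec_U, integral_add ha_W hInt_tc, integral_const_mul]
    rw [hW_u, hW_U]
    -- positivity of CW
    have hCW_nonneg : 0 ≤ CW := integral_nonneg fun x =>
      add_nonneg (Real.rpow_nonneg (norm_nonneg _) p) (Real.rpow_nonneg (abs_nonneg _) p)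
    have hCW_pos : 0 < CW := by
      rcases hCW_nonneg.lt_or_eq with h | h
      · exact h
      · exfalso
        have hzero : (fun x => ‖fderiv ℝ c x‖ ^ p + |c x| ^ p)
            =ᵐ[volume.restrict Ω] 0 := by
          rw [← integral_eq_zero_iff_of_nonneg_ae ?_ hc_W]
          · exact h.symm
          · exact Eventually.of_forall fun x =>
              add_nonneg (Real.rpow_nonneg (norm_nonneg _) p) (Real.rpow_nonneg (abs_nonneg _) p)
        have hc_zero : (fun x => |c x| ^ q) =ᵐ[volume.restrict Ω] 0 := by
          filter_upwards [hzero] with x hx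
          simp only [Pi.zero_apply] at hx ⊢
          by_contra hne
          have hcx : c x ≠ 0 := by
            intro h0; exact hne (by simp [h0, Real.zero_rpow hq_ne])
          have h1 : 0 < |c x| ^ p := Real.rpow_pos_of_pos (abs_pos.2 hcx) p
          have h2 : 0 ≤ ‖fderiv ℝ c x‖ ^ p := Real.rpow_nonneg (norm_nonneg _) p
          linarith
        exact hc_ne (integral_eq_zero_of_ae hc_zero)
    -- the inequality
    have htp : t ^ p < t ^ q := Real.rpow_lt_rpow_of_exponent_lt ht1 hpq
    have hrat : CW * B ≤ BW * C := by
      rw [ge_iff_le, div_le_div_iff₀ hC_pos hB_pos] at hratio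
      exact hratio
    have hkey : t ^ p * CW * C < (AW + (BW + CW)) * C - AW * C := by
      have h1 : t ^ p * CW * C < t ^ q * CW * C := by
        have := mul_lt_mul_of_pos_right (mul_lt_mul_of_pos_right htp hCW_pos) hC_pos
        exact this
      have h2 : t ^ q * CW * C = (B + C) * CW := by
        rw [htq]; field_simp
      nlinarith
    have : t ^ p * CW < BW + CW := by
      have h3 : t ^ p * CW * C < (BW + CW) * C := by nlinarith
      exact lt_of_mul_lt_mul_right (by linarith [h3]) hC_pos.le
    linarith
end

section
/- Under the hypotheses of the hump destruction lemma (a, b, c ∈ W^{1,p}(Ω) ∩ L^q(Ω) with pairwise disjoint supports, b, c ≢ 0, 1 < p < q, and ‖b‖_{W^{1,p}}^p/‖b‖_{L^q}^q ≥ ‖c‖_{W^{1,p}}^p/‖c‖_{L^q}^q), setting t = (‖b‖_{L^q}^q + ‖c‖_{L^q}^q)^{1/q}/‖c‖_{L^q}, one has the quantitative gap ‖a+b+c‖_{W^{1,p}}^p − ‖a + t·c‖_{W^{1,p}}^p ≥ ‖b‖_{W^{1,p}}^p + ‖c‖_{W^{1,p}}^p − (1 + (‖b‖_{L^q}/‖c‖_{L^q})^q)^{p/q}‖c‖_{W^{1,p}}^p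 > 0. -/
open MeasureTheory Set Function
open Metric Filter

set_option maxHeartbeats 1000000 in

lemma zero_set_fderiv_null {n : ℕ} (f : (Fin n → ℝ) → ℝ) (Ω : Set (Fin n → ℝ))
    (hΩ : IsOpen Ω) (hf : DifferentiableOn ℝ f Ω) :
    volume {x | x ∈ Ω ∧ f x = 0 ∧ fderiv ℝ f x ≠ 0} = 0 := by
  set μ : Measure (Fin n → ℝ) := volume
  set Z : Set (Fin n → ℝ) := {x | x ∈ Ω ∧ f x = 0 ∧ fderiv ℝ f x ≠ 0} with hZ
  have key : ∀ x ∈ Z, ¬ Tendsto (fun r => μ (Z ∩ closedBall x r) / μ (closedBall x r))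
      (nhdsWithin 0 (Ioi 0)) (nhds 1) := by
    rintro x ⟨hxΩ, hfx, hL⟩ htend
    have hd : DifferentiableAt ℝ f x :=
      (hf x hxΩ).differentiableAt (hΩ.mem_nhds hxΩ)
    set L := fderiv ℝ f x with hLdef
    have hF : HasFDerivAt f L x := hd.hasFDerivAt
    -- find a unit vector with positive derivative
    obtain ⟨w, hw⟩ : ∃ w, L w ≠ 0 := by
      by_contra h
      push_neg at h
      exact hL (ContinuousLinearMap.ext fun w => h w)
    obtain ⟨w, hw⟩ : ∃ w, 0 < L w := by
      rcases lt_or_gt_of_ne hw with h | h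
      · exact ⟨-w, by simpa using h⟩
      · exact ⟨w, h⟩
    have hwne : w ≠ 0 := by rintro rfl; simp at hw
    set v : (Fin n → ℝ) := ‖w‖⁻¹ • w with hv
    have hvnorm : ‖v‖ = 1 := by
      rw [hv, norm_smul, norm_inv, norm_norm]
      field_simp [norm_ne_zero_iff.2 hwne]
    set δ : ℝ := L v with hδ
    have hδpos : 0 < δ := by
      rw [hδ, hv, _root_.map_smul]
      exact smul_pos (inv_pos.2 (norm_pos_iff.2 hwne)) hw
    set M : ℝ := ‖L‖ with hM
    have hδM : δ ≤ M := by
      calc δ ≤ |L v| := le_abs_self _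
      _ ≤ ‖L‖ * ‖v‖ := L.le_opNorm v
      _ = M := by rw [hvnorm, mul_one]
    have hMpos : 0 < M := lt_of_lt_of_le hδpos hδM
    set η : ℝ := δ / (8 * M) with hη
    have hηpos : 0 < η := by positivity
    have hηle : η ≤ 1/8 := by
      rw [hη, div_le_div_iff₀ (by positivity) (by norm_num)]
      nlinarith
    -- quantitative differentiability
    have hlo := hF.isLittleO.def (show (0:ℝ) < δ/8 by positivity)
    rw [Metric.eventually_nhds_iff] at hlo
    obtain ⟨ε, hεpos, hε⟩ := hlo
    set r₀ : ℝ := ε/2 with hr₀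
    have hr₀pos : 0 < r₀ := by positivity
    set d : ℕ := Module.finrank ℝ (Fin n → ℝ) with hd'
    set cst : ENNReal := ENNReal.ofReal (1 - η ^ d) with hcst
    have hηd1 : η ^ d ≤ 1 := pow_le_one₀ hηpos.le (by linarith)
    have hcstlt : cst < 1 := by
      rw [hcst]
      have : (1:ENNReal) = ENNReal.ofReal 1 := by simp
      rw [this]
      exact ENNReal.ofReal_lt_ofReal_iff (by norm_num) |>.2 (by nlinarith [pow_pos hηpos d])
    -- the key ratio bound
    have hratio : ∀ r : ℝ, 0 < r → r ≤ r₀ →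
        μ (Z ∩ closedBall x r) / μ (closedBall x r) ≤ cst := by
      intro r hr hrr₀
      set z : (Fin n → ℝ) := x + (r/2) • v with hz
      have hsub1 : closedBall z (η * r) ⊆ closedBall x r := by
        intro y hy
        rw [mem_closedBall] at hy ⊢
        have h1 : dist y x ≤ dist y z + dist z x := dist_triangle _ _ _
        have h2 : dist z x = r/2 := by
          rw [hz, dist_eq_norm]
          simp [norm_smul, hvnorm, abs_of_pos hr, abs_div]
        nlinarith
      have hfpos : ∀ y ∈ closedBall z (η * r), 0 < f y := by
        intro y hy
        have hyx : ‖y - x‖ ≤ r := by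
          have := hsub1 hy
          rwa [mem_closedBall, dist_eq_norm] at this
        have hLyx : (3/8) * δ * r ≤ L (y - x) := by
          have : y - x = (y - z) + (r/2) • v := by rw [hz]; abel
          rw [this, map_add, _root_.map_smul]
          have h1 : |L (y - z)| ≤ M * (η * r) := by
            calc |L (y - z)| ≤ ‖L‖ * ‖y - z‖ := L.le_opNorm _
            _ ≤ M * (η * r) := by
                apply mul_le_mul_of_nonneg_left _ (norm_nonneg L)
                rw [← dist_eq_norm]; exact mem_closedBall.1 hy
          have h2 : M * (η * r) = (δ/8) * r := by
            rw [hη]; field_simp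
          have h3 : (r/2) • L v = (r/2) * δ := by rw [hδ]; simp [smul_eq_mul]
          rw [h3]
          nlinarith [neg_abs_le (L (y - z))]
        have herr : |f y - f x - L (y - x)| ≤ (δ/8) * ‖y - x‖ := by
          have hmem : dist y x < ε := lt_of_le_of_lt hyx (by rw [hr₀] at hrr₀; linarith)
          have := hε hmem
          simpa [Real.norm_eq_abs] using this
        rw [hfx, sub_zero] at herr
        have : f y ≥ L (y - x) - (δ/8) * ‖y - x‖ := by
          nlinarith [neg_abs_le (f y - L (y - x)), abs_nonneg (f y - L (y - x))]
        have h8 : (δ/8) * ‖y - x‖ ≤ (δ/8) * r :=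
          mul_le_mul_of_nonneg_left hyx (by positivity)
        nlinarith
      have hdisj : Z ∩ closedBall x r ⊆ closedBall x r \ closedBall z (η * r) := by
        rintro y ⟨hyZ, hyB⟩
        refine ⟨hyB, fun hyb => ?_⟩
        exact absurd hyZ.2.1 (ne_of_gt (hfpos y hyb))
      set κ : ENNReal := μ (ball (0 : Fin n → ℝ) 1) with hκ
      have hκ0 : κ ≠ 0 := (measure_ball_pos μ _ one_pos).ne'
      have hκtop : κ ≠ ⊤ := measure_ball_lt_top.ne
      have hBr : μ (closedBall x r) = ENNReal.ofReal (r ^ d) * κ :=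
        Measure.addHaar_closedBall μ x hr.le
      have hBs : μ (closedBall z (η * r)) = ENNReal.ofReal ((η * r) ^ d) * κ :=
        Measure.addHaar_closedBall μ z (by positivity)
      have hBne : μ (closedBall x r) ≠ 0 := by
        rw [hBr]
        exact mul_ne_zero (by simp only [ne_eq, ENNReal.ofReal_eq_zero, not_le]; positivity) hκ0
      have hBtop : μ (closedBall x r) ≠ ⊤ := measure_closedBall_lt_top.ne
      have hstep : μ (Z ∩ closedBall x r) ≤ cst * μ (closedBall x r) := by
        calc μ (Z ∩ closedBall x r) ≤ μ (closedBall x r \ closedBall z (η * r)) :=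
              measure_mono hdisj
        _ = μ (closedBall x r) - μ (closedBall z (η * r)) :=
              measure_diff hsub1 measurableSet_closedBall.nullMeasurableSet
                measure_closedBall_lt_top.ne
        _ = cst * μ (closedBall x r) := by
              rw [hBr, hBs, hcst, ← mul_assoc,
                ← ENNReal.sub_mul (fun _ _ => hκtop)]
              congr 1
              rw [← ENNReal.ofReal_sub _ (by positivity), ← ENNReal.ofReal_mul (by nlinarith)]
              congr 1
              rw [mul_pow]
              ring
      calc μ (Z ∩ closedBall x r) / μ (closedBall x r)
          ≤ cst * μ (closedBall x r) / μ (closedBall x r) :=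
            ENNReal.div_le_div_right hstep _
      _ = cst := by rw [mul_div_assoc, ENNReal.div_self hBne hBtop, mul_one]
    -- contradiction with density 1
    have h1 := htend.eventually (eventually_gt_nhds hcstlt)
    have h2 : Ioo (0:ℝ) r₀ ∈ nhdsWithin (0:ℝ) (Ioi 0) :=
      Ioo_mem_nhdsGT_of_mem ⟨le_rfl, hr₀pos⟩
    obtain ⟨r, hr1, hr2⟩ := (h1.and (eventually_of_mem h2 (fun r hr => hr))).exists
    exact absurd (hratio r hr2.1 hr2.2.le) (not_le.2 hr1)
  have hae := Besicovitch.ae_tendsto_measure_inter_div μ Z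
  rw [ae_iff] at hae
  have hsub : Z ⊆ {x | ¬ Tendsto (fun r => μ (Z ∩ closedBall x r) / μ (closedBall x r))
      (nhdsWithin 0 (Ioi 0)) (nhds 1)} := fun x hx => key x hx
  refine le_antisymm ?_ zero_le
  calc μ Z = μ.restrict Z Z := (Measure.restrict_apply_self μ Z).symm
  _ ≤ μ.restrict Z {x | ¬ Tendsto (fun r => μ (Z ∩ closedBall x r) / μ (closedBall x r))
      (nhdsWithin 0 (Ioi 0)) (nhds 1)} := measure_mono hsub
  _ = 0 := hae

set_option maxHeartbeats 1000000 in
/-- The hump destruction lemma: let `Ω ⊆ ℝⁿ` be a domain, `1 < p < q < ∞`, and let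
`a, b, c ∈ W^{1,p}(Ω) ∩ L^q(Ω)` have pairwise disjoint supports, with `b ≢ 0`, `c ≢ 0`
and `‖b‖_{W^{1,p}}^p / ‖b‖_{L^q}^q ≥ ‖c‖_{W^{1,p}}^p / ‖c‖_{L^q}^q`. Set `u = a + b + c`
and `U = a + t c`, `t = (‖b‖_{L^q}^q + ‖c‖_{L^q}^q)^{1/q} / ‖c‖_{L^q}`. Then
`∫_Ω |U|^q = ∫_Ω |u|^q` and `‖U‖_{W^{1,p}}^p < ‖u‖_{W^{1,p}}^p`. -/
theorem hump_destruction_quantitative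
    (n : ℕ) (Ω : Set (Fin n → ℝ)) (hΩ_open : IsOpen Ω) (hΩ_conn : IsConnected Ω)
    (p q : ℝ) (hp : 1 < p) (hpq : p < q)
    (a b c : (Fin n → ℝ) → ℝ)
    (ha_diff : DifferentiableOn ℝ a Ω) (hb_diff : DifferentiableOn ℝ b Ω)
    (hc_diff : DifferentiableOn ℝ c Ω)
    (ha_W : IntegrableOn (fun x => ‖fderiv ℝ a x‖ ^ p + |a x| ^ p) Ω)
    (hb_W : IntegrableOn (fun x => ‖fderiv ℝ b x‖ ^ p + |b x| ^ p) Ω)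
    (hc_W : IntegrableOn (fun x => ‖fderiv ℝ c x‖ ^ p + |c x| ^ p) Ω)
    (ha_Lq : IntegrableOn (fun x => |a x| ^ q) Ω)
    (hb_Lq : IntegrableOn (fun x => |b x| ^ q) Ω)
    (hc_Lq : IntegrableOn (fun x => |c x| ^ q) Ω)
    (hab : Disjoint (support a) (support b))
    (hac : Disjoint (support a) (support c))
    (hbc : Disjoint (support b) (support c))
    (hb_ne : ∫ x in Ω, |b x| ^ q ≠ 0) (hc_ne : ∫ x in Ω, |c x| ^ q ≠ 0)
    (hratio : (∫ x in Ω, (‖fderiv ℝ b x‖ ^ p + |b x| ^ p)) / (∫ x in Ω, |b x| ^ q)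
        ≥ (∫ x in Ω, (‖fderiv ℝ c x‖ ^ p + |c x| ^ p)) / (∫ x in Ω, |c x| ^ q)) :
    letI t : ℝ := ((∫ x in Ω, |b x| ^ q) + (∫ x in Ω, |c x| ^ q)) ^ (1 / q)
        / (∫ x in Ω, |c x| ^ q) ^ (1 / q)
    letI u : (Fin n → ℝ) → ℝ := fun x => a x + b x + c x
    letI U : (Fin n → ℝ) → ℝ := fun x => a x + t * c x
    letI gap : ℝ := (∫ x in Ω, (‖fderiv ℝ b x‖ ^ p + |b x| ^ p))
        + (∫ x in Ω, (‖fderiv ℝ c x‖ ^ p + |c x| ^ p))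
        - (1 + (∫ x in Ω, |b x| ^ q) / (∫ x in Ω, |c x| ^ q)) ^ (p / q)
            * (∫ x in Ω, (‖fderiv ℝ c x‖ ^ p + |c x| ^ p))
    (∫ x in Ω, (‖fderiv ℝ u x‖ ^ p + |u x| ^ p))
        - (∫ x in Ω, (‖fderiv ℝ U x‖ ^ p + |U x| ^ p)) ≥ gap ∧ 0 < gap := by
  beta_reduce
  set t : ℝ := ((∫ x in Ω, |b x| ^ q) + (∫ x in Ω, |c x| ^ q)) ^ (1 / q)
      / (∫ x in Ω, |c x| ^ q) ^ (1 / q) with htdef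
  set u : (Fin n → ℝ) → ℝ := fun x => a x + b x + c x with hu
  set U : (Fin n → ℝ) → ℝ := fun x => a x + t * c x with hU
  have hp0 : (0:ℝ) < p := by linarith
  have hq0 : (0:ℝ) < q := by linarith
  have hpne : p ≠ 0 := hp0.ne'
  set A : ℝ := ∫ x in Ω, (‖fderiv ℝ a x‖ ^ p + |a x| ^ p) with hA
  set B : ℝ := ∫ x in Ω, (‖fderiv ℝ b x‖ ^ p + |b x| ^ p) with hB
  set C : ℝ := ∫ x in Ω, (‖fderiv ℝ c x‖ ^ p + |c x| ^ p) with hC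
  set Bq : ℝ := ∫ x in Ω, |b x| ^ q with hBq
  set Cq : ℝ := ∫ x in Ω, |c x| ^ q with hCq
  have hBqpos : 0 < Bq :=
    lt_of_le_of_ne (integral_nonneg fun x => by positivity) (Ne.symm hb_ne)
  have hCqpos : 0 < Cq :=
    lt_of_le_of_ne (integral_nonneg fun x => by positivity) (Ne.symm hc_ne)
  have ht0 : 0 < t := by
    rw [htdef]
    exact div_pos (Real.rpow_pos_of_pos (by linarith) _) (Real.rpow_pos_of_pos hCqpos _)
  -- a.e. goodness
  have hgood : ∀ᵐ x ∂(volume.restrict Ω), x ∈ Ω ∧ (a x = 0 → fderiv ℝ a x = 0)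
      ∧ (b x = 0 → fderiv ℝ b x = 0) ∧ (c x = 0 → fderiv ℝ c x = 0) := by
    have hZa := zero_set_fderiv_null a Ω hΩ_open ha_diff
    have hZb := zero_set_fderiv_null b Ω hΩ_open hb_diff
    have hZc := zero_set_fderiv_null c Ω hΩ_open hc_diff
    rw [measure_eq_zero_iff_ae_notMem] at hZa hZb hZc
    filter_upwards [ae_restrict_mem hΩ_open.measurableSet, ae_restrict_of_ae hZa,
      ae_restrict_of_ae hZb, ae_restrict_of_ae hZc] with x hx hxa hxb hxc
    refine ⟨hx, fun h0 => ?_, fun h0 => ?_, fun h0 => ?_⟩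
    · by_contra hne; exact hxa ⟨hx, h0, hne⟩
    · by_contra hne; exact hxb ⟨hx, h0, hne⟩
    · by_contra hne; exact hxc ⟨hx, h0, hne⟩
  -- pointwise splitting for u
  have hE1 : ∀ᵐ x ∂(volume.restrict Ω),
      ‖fderiv ℝ u x‖ ^ p + |u x| ^ p
        = (‖fderiv ℝ a x‖ ^ p + |a x| ^ p) + (‖fderiv ℝ b x‖ ^ p + |b x| ^ p)
          + (‖fderiv ℝ c x‖ ^ p + |c x| ^ p) := by
    filter_upwards [hgood] with x hx
    obtain ⟨hxΩ, hga, hgb, hgc⟩ := hx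
    have hda : DifferentiableAt ℝ a x := (ha_diff x hxΩ).differentiableAt (hΩ_open.mem_nhds hxΩ)
    have hdb : DifferentiableAt ℝ b x := (hb_diff x hxΩ).differentiableAt (hΩ_open.mem_nhds hxΩ)
    have hdc : DifferentiableAt ℝ c x := (hc_diff x hxΩ).differentiableAt (hΩ_open.mem_nhds hxΩ)
    have hder : fderiv ℝ u x = fderiv ℝ a x + fderiv ℝ b x + fderiv ℝ c x := by
      show fderiv ℝ (fun x => a x + b x + c x) x = _
      rw [fderiv_fun_add (f := fun y => a y + b y) (hda.add hdb) hdc, fderiv_fun_add hda hdb]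
    have huval : u x = a x + b x + c x := rfl
    by_cases h1 : a x = 0
    · by_cases h2 : b x = 0
      · by_cases h3 : c x = 0
        · rw [huval, hder, hga h1, hgb h2, hgc h3, h1, h2, h3]
          simp [Real.zero_rpow hpne]
        · rw [huval, hder, hga h1, hgb h2, h1, h2]
          simp [Real.zero_rpow hpne]
      · have h3 : c x = 0 := by by_contra h; exact Set.disjoint_left.1 hbc h2 h
        rw [huval, hder, hga h1, hgc h3, h1, h3]
        simp [Real.zero_rpow hpne]
    · have h2 : b x = 0 := by by_contra h; exact Set.disjoint_left.1 hab h1 h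
      have h3 : c x = 0 := by by_contra h; exact Set.disjoint_left.1 hac h1 h
      rw [huval, hder, hgb h2, hgc h3, h2, h3]
      simp [Real.zero_rpow hpne]
  -- pointwise splitting for U
  have hE2 : ∀ᵐ x ∂(volume.restrict Ω),
      ‖fderiv ℝ U x‖ ^ p + |U x| ^ p
        = (‖fderiv ℝ a x‖ ^ p + |a x| ^ p) + t ^ p * (‖fderiv ℝ c x‖ ^ p + |c x| ^ p) := by
    filter_upwards [hgood] with x hx
    obtain ⟨hxΩ, hga, _, hgc⟩ := hx
    have hda : DifferentiableAt ℝ a x := (ha_diff x hxΩ).differentiableAt (hΩ_open.mem_nhds hxΩ)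
    have hdc : DifferentiableAt ℝ c x := (hc_diff x hxΩ).differentiableAt (hΩ_open.mem_nhds hxΩ)
    have hder : fderiv ℝ U x = fderiv ℝ a x + t • fderiv ℝ c x := by
      show fderiv ℝ (fun x => a x + t * c x) x = _
      rw [fderiv_fun_add hda (hdc.const_mul t), fderiv_const_mul hdc t]
    have hUval : U x = a x + t * c x := rfl
    by_cases h3 : c x = 0
    · rw [hUval, hder, hgc h3, h3]
      simp [Real.zero_rpow hpne, mul_nonneg ht0.le]
    · have h1 : a x = 0 := by
        by_contra h; exact Set.disjoint_left.1 hac h h3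
      rw [hUval, hder, hga h1, h1]
      have e1 : ‖(0 : (Fin n → ℝ) →L[ℝ] ℝ) + t • fderiv ℝ c x‖ = t * ‖fderiv ℝ c x‖ := by
        rw [zero_add, norm_smul t (fderiv ℝ c x), Real.norm_eq_abs, abs_of_pos ht0]
      have e2 : |(0:ℝ) + t * c x| = t * |c x| := by
        rw [zero_add, abs_mul, abs_of_pos ht0]
      rw [e1, e2, Real.mul_rpow ht0.le (norm_nonneg _), Real.mul_rpow ht0.le (abs_nonneg _)]
      simp [Real.zero_rpow hpne]
      ring
  have hIu : (∫ x in Ω, (‖fderiv ℝ u x‖ ^ p + |u x| ^ p)) = A + B + C := by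
    have h12 : IntegrableOn
        (fun x => (‖fderiv ℝ a x‖ ^ p + |a x| ^ p) + (‖fderiv ℝ b x‖ ^ p + |b x| ^ p)) Ω :=
      ha_W.add hb_W
    rw [integral_congr_ae hE1, integral_add h12 hc_W, integral_add ha_W hb_W]
  have hIU : (∫ x in Ω, (‖fderiv ℝ U x‖ ^ p + |U x| ^ p)) = A + t ^ p * C := by
    have h2 : IntegrableOn (fun x => t ^ p * (‖fderiv ℝ c x‖ ^ p + |c x| ^ p)) Ω :=
      hc_W.const_mul _
    rw [integral_congr_ae hE2, integral_add ha_W h2, integral_const_mul]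
  have htp : t ^ p = (1 + Bq / Cq) ^ (p / q) := by
    have h1 : t = (1 + Bq / Cq) ^ (1 / q) := by
      rw [htdef, show (1 : ℝ) + Bq / Cq = (Bq + Cq) / Cq by field_simp; ring,
        Real.div_rpow (by linarith) hCqpos.le]
    rw [h1, ← Real.rpow_mul (by positivity), show 1 / q * p = p / q by ring]
  have hkey : (1 + Bq / Cq) ^ (p / q) < 1 + Bq / Cq := by
    have h2 : (1:ℝ) < 1 + Bq / Cq := by
      have : 0 < Bq / Cq := div_pos hBqpos hCqpos
      linarith
    calc (1 + Bq / Cq) ^ (p / q) < (1 + Bq / Cq) ^ (1:ℝ) :=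
          Real.rpow_lt_rpow_of_exponent_lt h2 ((div_lt_one hq0).2 hpq)
    _ = 1 + Bq / Cq := Real.rpow_one _
  have hCpos : 0 < C := by
    have hsupp : 0 < (volume.restrict Ω) (support fun x => |c x| ^ q) :=
      (integral_pos_iff_support_of_nonneg (fun x => by positivity) hc_Lq).1 hCqpos
    have hsubset : (support fun x => |c x| ^ q)
        ⊆ support fun x => ‖fderiv ℝ c x‖ ^ p + |c x| ^ p := by
      intro x hx
      have hcx : c x ≠ 0 := by
        intro h; apply hx; simp [h, Real.zero_rpow hq0.ne']
      have : 0 < ‖fderiv ℝ c x‖ ^ p + |c x| ^ p := by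
        have := Real.rpow_pos_of_pos (abs_pos.2 hcx) p
        positivity
      exact this.ne'
    exact (integral_pos_iff_support_of_nonneg (fun x => by positivity) hc_W).2
      (lt_of_lt_of_le hsupp (measure_mono hsubset))
  have hcross : C * Bq ≤ B * Cq := by
    rw [ge_iff_le, div_le_div_iff₀ hCqpos hBqpos] at hratio
    exact hratio
  have hBsC : (Bq / Cq) * C ≤ B := by
    rw [div_mul_eq_mul_div, div_le_iff₀ hCqpos]
    nlinarith
  have hgap : (0:ℝ) < B + C - (1 + Bq / Cq) ^ (p / q) * C := by
    nlinarith [mul_pos (sub_pos.2 hkey) hCpos]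
  refine ⟨?_, hgap⟩
  rw [hIu, hIU, htp]
  linarith
end

section
/- For n = 2 and the weighted radial norms, there is a constant C > 0 such that for every R ≥ 1 and every u ∈ W^{1,2}((R,∞), r dr) one has ∫_R^∞ r|u(r)|^4 dr ≤ C·((R+1)/R²)·(∫_R^∞ r(|u(r)|² + |u'(r)|²) dr)². -/
open MeasureTheory Set

open Filter Topology

/-- Weighted radial tail estimate in dimension 2: there is `C > 0` such that for every
`R ≥ 1` and every `u ∈ W^{1,2}((R,∞), r dr)`,
`∫_R^∞ r |u|⁴ dr ≤ C ((R+1)/R²) (∫_R^∞ r (|u|² + |u'|²) dr)²`. -/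
theorem radial_tail_estimate :
    ∃ C : ℝ, 0 < C ∧ ∀ (R : ℝ), 1 ≤ R → ∀ (u : ℝ → ℝ),
      DifferentiableOn ℝ u (Ioi R) →
      IntegrableOn (fun r => r * (|u r| ^ 2 + |deriv u r| ^ 2)) (Ioi R) →
      IntegrableOn (fun r => r * |u r| ^ 4) (Ioi R) →
      (∫ r in Ioi R, r * |u r| ^ 4)
        ≤ C * ((R + 1) / R ^ 2) * (∫ r in Ioi R, r * (|u r| ^ 2 + |deriv u r| ^ 2)) ^ 2 := by
  refine ⟨1, one_pos, ?_⟩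
  intro R hR u hu hI hI4
  have hR0 : (0:ℝ) < R := lt_of_lt_of_le one_pos hR
  set w : ℝ → ℝ := fun r => r * (|u r| ^ 2 + |deriv u r| ^ 2) with hw
  set I : ℝ := ∫ r in Ioi R, w r with hIdef
  have hwnn : ∀ r ∈ Ioi R, 0 ≤ w r := by
    intro r hr
    have h0 : (0:ℝ) < r := lt_trans hR0 hr
    have h1 : 0 ≤ |u r| ^ 2 + |deriv u r| ^ 2 := by positivity
    exact mul_nonneg h0.le h1
  have hInn : 0 ≤ I := setIntegral_nonneg measurableSet_Ioi hwnn
  -- measurability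
  have hum : AEStronglyMeasurable u (volume.restrict (Ioi R)) :=
    hu.continuousOn.aestronglyMeasurable measurableSet_Ioi
  have hdm : AEStronglyMeasurable (deriv u) (volume.restrict (Ioi R)) :=
    (measurable_deriv u).aestronglyMeasurable
  -- pointwise bound for the derivative of u²
  have key2 : ∀ s ∈ Ioi R, ‖2 * u s * deriv u s‖ ≤ R⁻¹ * w s := by
    intro s hs
    have hsR : R < s := hs
    have habs : ‖2 * u s * deriv u s‖ = 2 * |u s| * |deriv u s| := by
      rw [Real.norm_eq_abs, abs_mul, abs_mul, abs_two]
    have hq : 0 ≤ |u s| ^ 2 + |deriv u s| ^ 2 := by positivity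
    have hdiv : 1 ≤ R⁻¹ * s := by
      rw [inv_mul_eq_div]
      exact (one_le_div hR0).2 hsR.le
    show ‖2 * u s * deriv u s‖ ≤ R⁻¹ * (s * (|u s| ^ 2 + |deriv u s| ^ 2))
    rw [habs, ← mul_assoc]
    nlinarith [sq_nonneg (|u s| - |deriv u s|),
      mul_le_mul_of_nonneg_right hdiv hq]
  -- integrability of the derivative of u²
  have hG : IntegrableOn (fun s => 2 * u s * deriv u s) (Ioi R) := by
    refine Integrable.mono' (hI.const_mul R⁻¹) ((hum.const_mul 2).mul hdm) ?_
    exact (ae_restrict_iff' measurableSet_Ioi).2 (ae_of_all _ key2)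
  -- integrability of u² and of r·u²
  have hsq : IntegrableOn (fun s => u s ^ 2) (Ioi R) := by
    refine Integrable.mono' hI ((hum.mul hum).congr (ae_of_all _ fun s => (sq (u s)).symm)) ?_
    refine (ae_restrict_iff' measurableSet_Ioi).2 (ae_of_all _ fun s hs => ?_)
    have hs1 : (1:ℝ) ≤ s := le_trans hR (le_of_lt hs)
    have h1 : 0 ≤ |u s| ^ 2 + |deriv u s| ^ 2 := by positivity
    have hns : ‖u s ^ 2‖ = |u s| ^ 2 := by
      rw [Real.norm_eq_abs, abs_pow]
    show ‖u s ^ 2‖ ≤ s * (|u s| ^ 2 + |deriv u s| ^ 2)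
    rw [hns]
    nlinarith [sq_nonneg (deriv u s), sq_abs (deriv u s)]
  have hrsq : IntegrableOn (fun s => s * u s ^ 2) (Ioi R) := by
    refine Integrable.mono' hI (aestronglyMeasurable_id.mul
      ((hum.mul hum).congr (ae_of_all _ fun s => (sq (u s)).symm))) ?_
    refine (ae_restrict_iff' measurableSet_Ioi).2 (ae_of_all _ fun s hs => ?_)
    have hs0 : (0:ℝ) < s := lt_trans hR0 hs
    have hns : ‖s * u s ^ 2‖ = s * u s ^ 2 := by
      rw [Real.norm_eq_abs, abs_of_nonneg (by positivity)]
    show ‖s * u s ^ 2‖ ≤ s * (|u s| ^ 2 + |deriv u s| ^ 2)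
    rw [hns]
    have h4 : u s ^ 2 = |u s| ^ 2 := (sq_abs (u s)).symm
    nlinarith [sq_nonneg (deriv u s), sq_abs (deriv u s)]
  -- key pointwise estimate: u(a)² ≤ I / R for a > R
  have key : ∀ a ∈ Ioi R, u a ^ 2 ≤ I / R := by
    intro a ha
    have haR : R < a := ha
    have hGa : IntegrableOn (fun s => 2 * u s * deriv u s) (Ioi a) :=
      hG.mono_set (Ioi_subset_Ioi haR.le)
    -- FTC on [a, b]
    have hFTC : ∀ b, a ≤ b → u b ^ 2 = u a ^ 2 + ∫ s in a..b, 2 * u s * deriv u s := by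
      intro b hab
      have hderiv : ∀ x ∈ uIcc a b, HasDerivAt (fun s => u s ^ 2) (2 * u x * deriv u x) x := by
        intro x hx
        rw [uIcc_of_le hab] at hx
        have hxI : x ∈ Ioi R := lt_of_lt_of_le haR hx.1
        have hd : HasDerivAt u (deriv u x) x :=
          ((hu x hxI).differentiableAt (Ioi_mem_nhds hxI)).hasDerivAt
        have := hd.pow 2
        show HasDerivAt (u ^ 2) (2 * u x * deriv u x) x
        simpa [mul_comm, mul_assoc, mul_left_comm] using this
      have hint : IntervalIntegrable (fun s => 2 * u s * deriv u s) volume a b := by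
        refine (IntegrableOn.mono_set hG ?_).intervalIntegrable
        rw [uIcc_of_le hab]
        exact fun x hx => lt_of_lt_of_le haR hx.1
      have := intervalIntegral.integral_eq_sub_of_hasDerivAt hderiv hint
      linarith [this]
    -- limit of u(b)² as b → ∞
    have hTb : Tendsto (fun b => ∫ s in a..b, 2 * u s * deriv u s) atTop
        (𝓝 (∫ s in Ioi a, 2 * u s * deriv u s)) :=
      intervalIntegral_tendsto_integral_Ioi a hGa tendsto_id
    set L : ℝ := u a ^ 2 + ∫ s in Ioi a, 2 * u s * deriv u s with hL
    have hTg : Tendsto (fun b => u b ^ 2) atTop (𝓝 L) := by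
      refine ((tendsto_const_nhds.add hTb)).congr' ?_
      filter_upwards [eventually_ge_atTop a] with b hb
      exact (hFTC b hb).symm
    -- the limit is zero
    have hL0 : L = 0 := by
      by_contra hne
      have hLnn : 0 ≤ L := ge_of_tendsto hTg (Eventually.of_forall fun b => sq_nonneg _)
      have hLpos : 0 < L := lt_of_le_of_ne hLnn (Ne.symm hne)
      have hev : ∀ᶠ b in atTop, L / 2 < u b ^ 2 :=
        hTg.eventually (eventually_gt_nhds (half_lt_self hLpos))
      obtain ⟨M, hM⟩ := hev.exists_forall_of_atTop
      set M' : ℝ := max M (R + 1) with hM'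
      have hconst : IntegrableOn (fun _ : ℝ => L / 2) (Ioi M') := by
        refine Integrable.mono' (IntegrableOn.mono_set hsq ?_) aestronglyMeasurable_const ?_
        · exact fun x hx => lt_of_lt_of_le (by linarith [le_max_right M (R+1)] : R < M') (le_of_lt hx)
        · refine (ae_restrict_iff' measurableSet_Ioi).2 (ae_of_all _ fun x hx => ?_)
          have hMx : M ≤ x := le_trans (le_max_left M (R+1)) (le_of_lt hx)
          have := hM x hMx
          rw [Real.norm_eq_abs, abs_of_nonneg (by linarith : (0:ℝ) ≤ L / 2)]
          linarith
      have := ((integrableOn_const_iff (C := L / 2)).1 hconst)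
      rcases this with h | h
      · exact absurd (enorm_eq_zero.1 h) (by linarith)
      · rw [Real.volume_Ioi] at h
        exact absurd h (lt_irrefl _)
    -- conclude the bound
    have hval : u a ^ 2 = - ∫ s in Ioi a, 2 * u s * deriv u s := by
      have h0 := hL0
      rw [hL] at h0
      linarith
    have hnorm : - (∫ s in Ioi a, 2 * u s * deriv u s)
        ≤ ∫ s in Ioi a, ‖2 * u s * deriv u s‖ := by
      have h1 := norm_integral_le_integral_norm (μ := volume.restrict (Ioi a))
        (f := fun s => 2 * u s * deriv u s)
      have h2 : - (∫ s in Ioi a, 2 * u s * deriv u s)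
          ≤ ‖∫ s in Ioi a, 2 * u s * deriv u s‖ := neg_le_abs _
      exact le_trans h2 h1
    have hstep : ∫ s in Ioi a, ‖2 * u s * deriv u s‖ ≤ ∫ s in Ioi a, R⁻¹ * w s := by
      refine setIntegral_mono_on hGa.norm (IntegrableOn.mono_set (hI.const_mul R⁻¹)
        (Ioi_subset_Ioi haR.le)) measurableSet_Ioi ?_
      intro x hx
      exact key2 x (lt_trans haR hx)
    have hstep2 : ∫ s in Ioi a, R⁻¹ * w s ≤ ∫ s in Ioi R, R⁻¹ * w s := by
      refine setIntegral_mono_set (hI.const_mul R⁻¹) ?_ ?_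
      · refine (ae_restrict_iff' measurableSet_Ioi).2 (ae_of_all _ fun x hx => ?_)
        exact mul_nonneg (inv_nonneg.2 hR0.le) (hwnn x hx)
      · exact HasSubset.Subset.eventuallyLE (Ioi_subset_Ioi haR.le)
    have hIR : ∫ s in Ioi R, R⁻¹ * w s = I / R := by
      rw [integral_const_mul, ← hIdef]
      ring
    calc u a ^ 2 = - ∫ s in Ioi a, 2 * u s * deriv u s := hval
      _ ≤ ∫ s in Ioi a, ‖2 * u s * deriv u s‖ := hnorm
      _ ≤ ∫ s in Ioi a, R⁻¹ * w s := hstep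
      _ ≤ ∫ s in Ioi R, R⁻¹ * w s := hstep2
      _ = I / R := hIR
  -- main chain
  have step1 : (∫ r in Ioi R, r * |u r| ^ 4) ≤ ∫ r in Ioi R, (I / R) * (r * u r ^ 2) := by
    refine setIntegral_mono_on hI4 (hrsq.const_mul (I / R)) measurableSet_Ioi ?_
    intro x hx
    have hx0 : (0:ℝ) < x := lt_trans hR0 hx
    have h1 : u x ^ 2 ≤ I / R := key x hx
    have h4 : |u x| ^ 4 = u x ^ 4 := by
      rw [← abs_pow, abs_of_nonneg (by positivity)]
    rw [h4]
    nlinarith [sq_nonneg (u x), mul_nonneg hx0.le (sq_nonneg (u x))]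
  have step2 : (∫ r in Ioi R, (I / R) * (r * u r ^ 2)) = (I / R) * ∫ r in Ioi R, r * u r ^ 2 :=
    integral_const_mul _ _
  have step3 : (∫ r in Ioi R, r * u r ^ 2) ≤ I := by
    refine setIntegral_mono_on hrsq hI measurableSet_Ioi ?_
    intro x hx
    have hx0 : (0:ℝ) < x := lt_trans hR0 hx
    have h4 : u x ^ 2 = |u x| ^ 2 := (sq_abs (u x)).symm
    show x * u x ^ 2 ≤ x * (|u x| ^ 2 + |deriv u x| ^ 2)
    nlinarith [sq_nonneg (deriv u x), sq_abs (deriv u x)]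
  have hfinal : (I / R) * (∫ r in Ioi R, r * u r ^ 2) ≤ (I / R) * I :=
    mul_le_mul_of_nonneg_left step3 (div_nonneg hInn hR0.le)
  have hcoef : (I / R) * I ≤ 1 * ((R + 1) / R ^ 2) * I ^ 2 := by
    have h1 : (1:ℝ) / R ≤ (R + 1) / R ^ 2 := by
      rw [div_le_div_iff₀ hR0 (by positivity)]
      nlinarith
    have h2 : (I / R) * I = (1 / R) * I ^ 2 := by ring
    rw [h2, one_mul]
    exact mul_le_mul_of_nonneg_right h1 (sq_nonneg I)
  calc (∫ r in Ioi R, r * |u r| ^ 4)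
      ≤ ∫ r in Ioi R, (I / R) * (r * u r ^ 2) := step1
    _ = (I / R) * ∫ r in Ioi R, r * u r ^ 2 := step2
    _ ≤ (I / R) * I := hfinal
    _ ≤ 1 * ((R + 1) / R ^ 2) * I ^ 2 := hcoef
end

section
/- Let 1 < p, n ≥ 1, and let σ_R be Lipschitz cutoff functions on ℝⁿ with 0 ≤ σ_R ≤ 1, |∇σ_R| ≤ 12/(ρ'(R) − ρ), and ∇σ_R supported in the annulus {ρ ≤ |x − x_R| ≤ ρ'(R)} where ρ'(R) → ∞. If q < p* and u_R is bounded in W^{1,p} and normalized in L^q, then ‖|u_R|·|∇σ_R|‖_{L^p}^p ≤ C·(ρ'(R))^{n − np/q}·(ρ'(R) − ρ)^{−p}·‖u_R‖_{L^q}^p → 0 as R → ∞. -/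
open MeasureTheory Filter Metric Set Function
open scoped ENNReal

/-- The cut-off gradient estimate: if `σ_R` are Lipschitz cut-offs with
`0 ≤ σ_R ≤ 1`, `|∇σ_R| ≤ 12/(ρ'(R) - ρ)`, `∇σ_R` supported in the annulus
`{ρ ≤ |x - x_R| ≤ ρ'(R)}` with `ρ'(R) → ∞`, and `u_R` is normalized in `L^q` with
`q < p*`, then `∫ |u_R|^p |∇σ_R|^p ≤ C (ρ'(R))^{n - np/q} (ρ'(R) - ρ)^{-p} (∫|u_R|^q)^{p/q}`
and this quantity tends to `0`. -/
theorem cutoff_gradient_estimate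
    (n : ℕ) (hn : 1 ≤ n) (p q : ℝ) (hp : 1 < p) (hpq : p < q)
    (hq_sub : p < n → q < n * p / (n - p))
    (ρ : ℝ) (hρ : 0 < ρ) (ρ' : ℕ → ℝ) (hρ' : Tendsto ρ' atTop atTop)
    (hρ'ρ : ∀ R, ρ < ρ' R)
    (x : ℕ → (Fin n → ℝ))
    (σ : ℕ → (Fin n → ℝ) → ℝ)
    (hσ_diff : ∀ R, Differentiable ℝ (σ R))
    (hσ01 : ∀ R y, σ R y ∈ Set.Icc (0 : ℝ) 1)
    (hσ_grad : ∀ R y, ‖fderiv ℝ (σ R) y‖ ≤ 12 / (ρ' R - ρ))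
    (hσ_supp : ∀ R, support (fun y => fderiv ℝ (σ R) y)
      ⊆ {y | ρ ≤ dist y (x R) ∧ dist y (x R) ≤ ρ' R})
    (u : ℕ → (Fin n → ℝ) → ℝ)
    (hu_meas : ∀ R, Measurable (u R))
    (hu_Lq : ∀ R, Integrable (fun y => |u R y| ^ q))
    (hu_norm : ∀ R, (∫ y, |u R y| ^ q) = 1) :
    ∃ C : ℝ, 0 < C ∧
      (∀ R, (∫ y, |u R y| ^ p * ‖fderiv ℝ (σ R) y‖ ^ p)
        ≤ C * (ρ' R) ^ ((n : ℝ) - n * p / q) * (ρ' R - ρ) ^ (-p)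
            * (∫ y, |u R y| ^ q) ^ (p / q)) ∧
      Tendsto (fun R => ∫ y, |u R y| ^ p * ‖fderiv ℝ (σ R) y‖ ^ p) atTop (nhds 0) := by
  have hp0 : (0:ℝ) < p := lt_trans one_pos hp
  have hq0 : (0:ℝ) < q := lt_trans hp0 hpq
  have hn0 : (0:ℝ) < (n:ℝ) := by exact_mod_cast Nat.lt_of_lt_of_le Nat.zero_lt_one hn
  have hβ0 : 0 ≤ (q - p) / q := by
    apply div_nonneg (by linarith) hq0.le
  have hαβ : (n:ℝ) * ((q - p) / q) = (n : ℝ) - n * p / q := by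
    field_simp
  have hαp : (n : ℝ) - n * p / q < p := by
    by_cases hpn : p < n
    · have h1 : q * ((n:ℝ) - p) < n * p := by
        have h2 := hq_sub hpn
        have h3 : (0:ℝ) < (n:ℝ) - p := by linarith
        calc q * ((n:ℝ) - p) < (n * p / ((n:ℝ) - p)) * ((n:ℝ) - p) := by
              exact mul_lt_mul_of_pos_right h2 h3
          _ = n * p := by field_simp
      have h4 : (n:ℝ) - p < n * p / q := by
        rw [lt_div_iff₀ hq0]; nlinarith
      linarith
    · push_neg at hpn
      have h5 : 0 < (n:ℝ) * p / q := by positivity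
      linarith
  set m : ℝ≥0∞ := volume (ball (0 : Fin n → ℝ) 1) with hm_def
  have hm0 : m ≠ 0 := (measure_ball_pos _ _ one_pos).ne'
  have hm_top : m ≠ ⊤ := measure_ball_lt_top.ne
  have hmt : 0 < m.toReal := ENNReal.toReal_pos hm0 hm_top
  set C : ℝ := 12 ^ p * m.toReal ^ ((q - p) / q) with hC_def
  have hC : 0 < C := by positivity
  -- the key uniform bound
  have key : ∀ R, (∫ y, |u R y| ^ p * ‖fderiv ℝ (σ R) y‖ ^ p)
      ≤ C * (ρ' R) ^ ((n : ℝ) - n * p / q) * (ρ' R - ρ) ^ (-p) := by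
    intro R
    have hρR : 0 < ρ' R - ρ := sub_pos.mpr (hρ'ρ R)
    have hρ'pos : 0 < ρ' R := lt_trans hρ (hρ'ρ R)
    set g : (Fin n → ℝ) → ℝ := fun y => ‖fderiv ℝ (σ R) y‖ with hg_def
    set b : ℝ := 12 / (ρ' R - ρ) with hb_def
    have hb : 0 < b := by positivity
    set A : Set (Fin n → ℝ) := closedBall (x R) (ρ' R) with hA_def
    have hA : MeasurableSet A := measurableSet_closedBall
    have hgA : ∀ y ∉ A, g y = 0 := by
      intro y hy
      by_contra h
      have hy' : y ∈ support (fun y => fderiv ℝ (σ R) y) := by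
        simp only [mem_support]
        intro h0
        exact h (by simp [hg_def, h0])
      exact hy (mem_closedBall.mpr (hσ_supp R hy').2)
    have hrpow_meas : Measurable fun s : ℝ => s ^ p :=
      (Real.continuous_rpow_const hp0.le).measurable
    have hum : Measurable fun y => |u R y| ^ p := hrpow_meas.comp (hu_meas R).abs
    have hgm : Measurable fun y => g y ^ p :=
      hrpow_meas.comp (measurable_fderiv ℝ (σ R)).norm
    have hmeas : Measurable fun y => |u R y| ^ p * g y ^ p := hum.mul hgm
    have hnonneg : ∀ y, 0 ≤ |u R y| ^ p * g y ^ p := fun y =>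
      mul_nonneg (Real.rpow_nonneg (abs_nonneg _) _) (Real.rpow_nonneg (norm_nonneg _) _)
    have hI : (∫ y, |u R y| ^ p * g y ^ p)
        = (∫⁻ y, ENNReal.ofReal (|u R y| ^ p * g y ^ p)).toReal :=
      integral_eq_lintegral_of_nonneg_ae (Eventually.of_forall hnonneg)
        hmeas.aestronglyMeasurable
    -- pointwise bound and pulling out the constant
    have step1 : (∫⁻ y, ENNReal.ofReal (|u R y| ^ p * g y ^ p))
        ≤ ENNReal.ofReal (b ^ p)
          * ∫⁻ y, A.indicator (fun _ => (1:ℝ≥0∞)) y * ENNReal.ofReal (|u R y| ^ p) := by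
      rw [← lintegral_const_mul _ ((by exact (measurable_const.indicator hA).mul hum.ennreal_ofReal) : Measurable fun y => A.indicator (fun _ => (1:ℝ≥0∞)) y * ENNReal.ofReal (|u R y| ^ p))]
      refine lintegral_mono fun y => ?_
      by_cases hy : y ∈ A
      · rw [indicator_of_mem hy, one_mul,
          ← ENNReal.ofReal_mul (Real.rpow_nonneg hb.le p)]
        apply ENNReal.ofReal_le_ofReal
        calc |u R y| ^ p * g y ^ p ≤ |u R y| ^ p * b ^ p :=
              mul_le_mul_of_nonneg_left
                (Real.rpow_le_rpow (norm_nonneg _) (hσ_grad R y) hp0.le)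
                (Real.rpow_nonneg (abs_nonneg _) _)
          _ = b ^ p * |u R y| ^ p := mul_comm _ _
      · rw [hgA y hy, Real.zero_rpow hp0.ne', mul_zero, indicator_of_notMem hy]
        simp
    -- Hölder
    have hrs : Real.HolderConjugate (q/(q-p)) (q/p) := by
      constructor
      · rw [inv_div, inv_div, inv_one, ← add_div, sub_add_cancel, div_self hq0.ne']
      · exact div_pos hq0 (by linarith)
      · exact div_pos hq0 hp0
    have holder := ENNReal.lintegral_mul_le_Lp_mul_Lq volume hrs
      (measurable_const.indicator hA : Measurable (A.indicator (fun _ => (1:ℝ≥0∞)))).aemeasurable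
      hum.ennreal_ofReal.aemeasurable
    simp only [Pi.mul_apply] at holder
    have h1 : (∫⁻ y, (A.indicator (fun _ => (1:ℝ≥0∞)) y) ^ (q/(q-p))) = volume A := by
      rw [← lintegral_indicator_one hA]
      congr 1; funext y
      by_cases hy : y ∈ A
      · simp [indicator_of_mem hy]
      · simp [indicator_of_notMem hy,
          ENNReal.zero_rpow_of_pos (show (0:ℝ) < q/(q-p) from div_pos hq0 (by linarith))]
    have h2 : (∫⁻ y, (ENNReal.ofReal (|u R y| ^ p)) ^ (q/p)) = 1 := by
      have heq : ∀ y : Fin n → ℝ,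
          (ENNReal.ofReal (|u R y| ^ p)) ^ (q/p) = ENNReal.ofReal (|u R y| ^ q) := by
        intro y
        rw [ENNReal.ofReal_rpow_of_nonneg (Real.rpow_nonneg (abs_nonneg _) _)
          (by positivity), ← Real.rpow_mul (abs_nonneg _)]
        congr 1
        field_simp
      simp_rw [heq]
      rw [← ofReal_integral_eq_lintegral_ofReal (hu_Lq R)
        (Eventually.of_forall fun y => Real.rpow_nonneg (abs_nonneg _) _),
        hu_norm R, ENNReal.ofReal_one]
    rw [h1, h2, ENNReal.one_rpow, mul_one] at holder
    have h1r : 1 / (q/(q-p)) = (q - p) / q := one_div_div _ _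
    rw [h1r] at holder
    -- compute the measure of the ball
    have hvolA : volume A = ENNReal.ofReal (ρ' R ^ n) * m := by
      rw [hA_def, Measure.addHaar_closedBall volume (x R) hρ'pos.le, hm_def]
      congr 2
      simp [Module.finrank_fin_fun]
    have hvolAβ : (volume A) ^ ((q - p) / q) = ENNReal.ofReal (ρ' R ^ ((n : ℝ) - n * p / q) * m.toReal ^ ((q - p) / q)) := by
      rw [hvolA, ENNReal.mul_rpow_of_nonneg _ _ hβ0,
        ENNReal.ofReal_rpow_of_nonneg (by positivity) hβ0]
      have hpow : (ρ' R ^ n : ℝ) ^ ((q - p) / q) = ρ' R ^ ((n : ℝ) - n * p / q) := by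
        rw [← Real.rpow_natCast (ρ' R) n, ← Real.rpow_mul hρ'pos.le, hαβ]
      rw [hpow]
      have hmβ : m ^ ((q - p) / q) = ENNReal.ofReal (m.toReal ^ ((q - p) / q)) := by
        conv_lhs => rw [← ENNReal.ofReal_toReal hm_top]
        rw [ENNReal.ofReal_rpow_of_nonneg ENNReal.toReal_nonneg hβ0]
      rw [hmβ, ← ENNReal.ofReal_mul (Real.rpow_nonneg hρ'pos.le _)]
    -- put everything together
    have hbp : b ^ p = 12 ^ p * (ρ' R - ρ) ^ (-p) := by
      rw [hb_def, Real.div_rpow (by norm_num) hρR.le, Real.rpow_neg hρR.le,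
        div_eq_mul_inv]
    have hL : (∫⁻ y, ENNReal.ofReal (|u R y| ^ p * g y ^ p))
        ≤ ENNReal.ofReal (C * (ρ' R) ^ ((n : ℝ) - n * p / q) * (ρ' R - ρ) ^ (-p)) := by
      calc (∫⁻ y, ENNReal.ofReal (|u R y| ^ p * g y ^ p))
          ≤ ENNReal.ofReal (b ^ p)
            * ∫⁻ y, A.indicator (fun _ => (1:ℝ≥0∞)) y * ENNReal.ofReal (|u R y| ^ p) :=
            step1
        _ ≤ ENNReal.ofReal (b ^ p) * (volume A) ^ ((q - p) / q) :=
            mul_le_mul_right holder _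
        _ = ENNReal.ofReal (b ^ p * (ρ' R ^ ((n : ℝ) - n * p / q) * m.toReal ^ ((q - p) / q))) := by
            rw [hvolAβ, ← ENNReal.ofReal_mul (Real.rpow_nonneg hb.le _)]
        _ = ENNReal.ofReal (C * (ρ' R) ^ ((n : ℝ) - n * p / q) * (ρ' R - ρ) ^ (-p)) := by
            congr 1
            rw [hbp, hC_def]; ring
    rw [hI]
    exact ENNReal.toReal_le_of_le_ofReal
      (mul_nonneg (mul_nonneg hC.le (Real.rpow_nonneg hρ'pos.le _))
        (Real.rpow_nonneg hρR.le _)) hL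
  -- nonnegativity of the integrals
  have hInn : ∀ R, 0 ≤ ∫ y, |u R y| ^ p * ‖fderiv ℝ (σ R) y‖ ^ p := fun R =>
    integral_nonneg fun y =>
      mul_nonneg (Real.rpow_nonneg (abs_nonneg _) _) (Real.rpow_nonneg (norm_nonneg _) _)
  -- the bound tends to zero
  have hg0 : Tendsto (fun R => C * ρ' R ^ ((n : ℝ) - n * p / q) * (ρ' R - ρ) ^ (-p)) atTop (nhds 0) := by
    have hbound : ∀ᶠ R in atTop,
        C * ρ' R ^ ((n : ℝ) - n * p / q) * (ρ' R - ρ) ^ (-p) ≤ (C * 2 ^ p) * ρ' R ^ (((n : ℝ) - n * p / q) - p) := by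
      filter_upwards [hρ'.eventually_ge_atTop (max (2*ρ) 1)] with R hR
      set t := ρ' R with ht_def
      have ht1 : 1 ≤ t := le_trans (le_max_right _ _) hR
      have ht2 : 2*ρ ≤ t := le_trans (le_max_left _ _) hR
      have ht0 : 0 < t := lt_of_lt_of_le one_pos ht1
      have h1 : (t - ρ) ^ (-p) ≤ (t/2) ^ (-p) :=
        Real.rpow_le_rpow_of_nonpos (by linarith) (by linarith) (by linarith)
      have h2inv : ((2:ℝ)⁻¹) ^ (-p) = 2 ^ p := by
        rw [Real.inv_rpow (by norm_num), Real.rpow_neg (by norm_num), inv_inv]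
      have h2 : (t/2:ℝ) ^ (-p) = 2 ^ p * t ^ (-p) := by
        rw [div_eq_mul_inv, Real.mul_rpow ht0.le (by norm_num), h2inv]; ring
      calc C * t ^ ((n : ℝ) - n * p / q) * (t - ρ) ^ (-p) ≤ C * t ^ ((n : ℝ) - n * p / q) * (t/2) ^ (-p) :=
            mul_le_mul_of_nonneg_left h1 (by positivity)
        _ = (C * 2 ^ p) * (t ^ ((n : ℝ) - n * p / q) * t ^ (-p)) := by rw [h2]; ring
        _ = (C * 2 ^ p) * t ^ (((n : ℝ) - n * p / q) - p) := by
            rw [← Real.rpow_add ht0]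
            ring_nf
    have hlim : Tendsto (fun R => (C * 2 ^ p) * ρ' R ^ (((n : ℝ) - n * p / q) - p)) atTop (nhds 0) := by
      have h3 : Tendsto (fun s : ℝ => s ^ (((n : ℝ) - n * p / q) - p)) atTop (nhds 0) := by
        have := tendsto_rpow_neg_atTop (sub_pos.mpr hαp)
        simpa [neg_sub] using this
      have h4 := (h3.comp hρ').const_mul (C * 2 ^ p)
      simpa using h4
    refine squeeze_zero' ?_ hbound hlim
    filter_upwards with R
    have h6 : (0:ℝ) ≤ ρ' R := le_of_lt (lt_trans hρ (hρ'ρ R))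
    have h7 : (0:ℝ) ≤ ρ' R - ρ := by linarith [hρ'ρ R]
    exact mul_nonneg (mul_nonneg hC.le (Real.rpow_nonneg h6 _)) (Real.rpow_nonneg h7 _)
  refine ⟨C, hC, fun R => ?_, ?_⟩
  · rw [hu_norm R, Real.one_rpow, mul_one]
    exact key R
  · exact squeeze_zero hInn key hg0
end

section
/- For λ > 0, the function r(x) = −2λ/(e^{λx} + (3/2)e^{−λx}) satisfies the ODE r'' − λ²r + 3r³ = 0 on ℝ, and r(x) → 0 as x → ±∞. -/
open Real Filter

/-- For `λ > 0`, the function `r(x) = -2λ / (e^{λx} + (3/2) e^{-λx})` satisfies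
`r'' - λ² r + 3 r³ = 0` on `ℝ`, and `r(x) → 0` as `x → ±∞`. -/
theorem homoclinic_orbit_explicit (lam : ℝ) (hlam : 0 < lam) :
    let r : ℝ → ℝ := fun x => -2 * lam / (Real.exp (lam * x) + (3 / 2) * Real.exp (-(lam * x)))
    (∀ x : ℝ, deriv (deriv r) x - lam ^ 2 * r x + 3 * (r x) ^ 3 = 0) ∧
    Tendsto r atTop (nhds 0) ∧ Tendsto r atBot (nhds 0) := by
  intro r
  set D : ℝ → ℝ := fun x => Real.exp (lam * x) + (3 / 2) * Real.exp (-(lam * x)) with hDdef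
  have hDpos : ∀ x, 0 < D x := fun x => by positivity
  have hDne : ∀ x, D x ≠ 0 := fun x => (hDpos x).ne'
  set D' : ℝ → ℝ := fun x => lam * Real.exp (lam * x) - 3 / 2 * lam * Real.exp (-(lam * x))
    with hD'def
  have hD : ∀ x, HasDerivAt D (D' x) x := by
    intro x
    have h1 : HasDerivAt (fun x : ℝ => Real.exp (lam * x)) (lam * Real.exp (lam * x)) x := by
      have := ((hasDerivAt_id x).const_mul lam).exp
      simpa [mul_comm] using this
    have h2 : HasDerivAt (fun x : ℝ => (3/2) * Real.exp (-(lam * x)))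
        (-(3/2 * lam) * Real.exp (-(lam * x))) x := by
      have := (((hasDerivAt_id x).const_mul lam).neg.exp).const_mul (3/2 : ℝ)
      simpa [mul_comm, mul_assoc, mul_left_comm] using this
    have := h1.add h2
    refine this.congr_deriv ?_
    simp only [hD'def]
    all_goals ring
  have hr : ∀ x, HasDerivAt r (2 * lam * D' x / (D x) ^ 2) x := by
    intro x
    have := (hasDerivAt_const x (-2 * lam)).div (hD x) (hDne x)
    refine this.congr_deriv ?_
    field_simp
    all_goals ring
  have hderiv_r : deriv r = fun x => 2 * lam * D' x / (D x) ^ 2 := by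
    funext x; exact (hr x).deriv
  have hD'' : ∀ x, HasDerivAt D' (lam ^ 2 * D x) x := by
    intro x
    have h1 : HasDerivAt (fun x : ℝ => lam * Real.exp (lam * x))
        (lam * (lam * Real.exp (lam * x))) x := by
      have := ((hasDerivAt_id x).const_mul lam).exp
      exact (by simpa [mul_comm] using this : HasDerivAt (fun x : ℝ => Real.exp (lam * x))
        (lam * Real.exp (lam * x)) x).const_mul lam
    have h2 : HasDerivAt (fun x : ℝ => 3/2 * lam * Real.exp (-(lam * x)))
        (3/2 * lam * (-lam * Real.exp (-(lam * x)))) x := by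
      have := ((hasDerivAt_id x).const_mul lam).neg.exp
      exact (by simpa [mul_comm] using this : HasDerivAt (fun x : ℝ => Real.exp (-(lam * x)))
        (-lam * Real.exp (-(lam * x))) x).const_mul (3/2 * lam)
    have := h1.sub h2
    refine this.congr_deriv ?_
    simp only [hDdef]
    all_goals ring
  have hr2 : ∀ x, deriv (deriv r) x =
      (2 * lam * (lam ^ 2 * D x) * (D x) ^ 2 - 2 * lam * D' x * (2 * D x * D' x)) / ((D x)^2)^2 := by
    intro x
    rw [hderiv_r]
    have hden : HasDerivAt (fun x => (D x) ^ 2) (2 * D x * D' x) x := by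
      have := (hD x).fun_pow 2
      simpa [mul_comm, mul_assoc] using this
    have hnum : HasDerivAt (fun x => 2 * lam * D' x) (2 * lam * (lam ^ 2 * D x)) x :=
      (hD'' x).const_mul _
    have := hnum.div hden (pow_ne_zero 2 (hDne x))
    exact this.deriv
  constructor
  · intro x
    rw [hr2 x]
    have hab : Real.exp (lam * x) * Real.exp (-(lam * x)) = 1 := by
      rw [← Real.exp_add]; simp
    have hx : D x = Real.exp (lam * x) + (3/2) * Real.exp (-(lam * x)) := rfl
    have hx' : D' x = lam * Real.exp (lam * x) - 3/2 * lam * Real.exp (-(lam * x)) := rfl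
    have hrx : r x = -2 * lam / D x := rfl
    have key : lam ^ 2 * (D x) ^ 2 - (D' x) ^ 2 = 6 * lam ^ 2 := by
      rw [hx, hx']; linear_combination (6 * lam ^ 2) * hab
    have hd := hDne x
    rw [hrx]
    field_simp
    linear_combination (4 * lam) * key
  · have htop : Tendsto D atTop atTop := by
      have h1 : Tendsto (fun x : ℝ => Real.exp (lam * x)) atTop atTop :=
        Real.tendsto_exp_atTop.comp (tendsto_id.const_mul_atTop hlam)
      have h2 : Tendsto (fun x : ℝ => (3/2) * Real.exp (-(lam * x))) atTop (nhds 0) := by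
        have : Tendsto (fun x : ℝ => Real.exp (-(lam * x))) atTop (nhds 0) := by
          apply Real.tendsto_exp_atBot.comp
          exact tendsto_neg_atTop_atBot.comp (tendsto_id.const_mul_atTop hlam)
        simpa using this.const_mul (3/2 : ℝ)
      exact h1.atTop_add h2
    have hbot : Tendsto D atBot atTop := by
      have h1 : Tendsto (fun x : ℝ => (3/2) * Real.exp (-(lam * x))) atBot atTop := by
        have : Tendsto (fun x : ℝ => Real.exp (-(lam * x))) atBot atTop := by
          apply Real.tendsto_exp_atTop.comp
          have : Tendsto (fun x : ℝ => lam * x) atBot atBot := tendsto_id.const_mul_atBot hlam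
          exact tendsto_neg_atBot_atTop.comp this
        exact this.const_mul_atTop (by norm_num)
      have h2 : Tendsto (fun x : ℝ => Real.exp (lam * x)) atBot (nhds 0) :=
        Real.tendsto_exp_atBot.comp (tendsto_id.const_mul_atBot hlam)
      exact h2.add_atTop h1
    constructor
    · exact (tendsto_const_nhds.div_atTop htop : Tendsto (fun x => -2 * lam / D x) atTop (nhds 0))
    · exact (tendsto_const_nhds.div_atTop hbot : Tendsto (fun x => -2 * lam / D x) atBot (nhds 0))
end
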